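/- arXiv:1407.4962 — 5 statements merged into one kernel-verified Lean document; each statement's English description precedes it below -/
import Mathlib

section
/- Let u be a nonempty string of length n over an alphabet. If β(u) = α^j(u) for some integer j, then the dihedral orbit of u has exactly p(u) elements; if β(u) ≠ α^j(u) for all integers j, then the dihedral orbit of u has exactly 2·p(u) elements. -/
open scoped Classical

/-- Cyclic shift `α`: maps `u₁u₂⋯uₙ` to `uₙu₁⋯uₙ₋₁`. -/
def cyc {α : Type*} (u : List α) : List α := u.rotate (u.length - 1)

/-- `listPow v k` is the concatenation of `k` copies of `v`. -/
def listPow {α : Type*} (v : List α) (k : ℕ) : List α := (List.replicate k v).flatten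

/-- The period of `u`: the least `k > 0` with `cyc^[k] u = u`. -/
noncomputable def period {α : Type*} (u : List α) : ℕ := sInf {k | 0 < k ∧ cyc^[k] u = u}

/-- `u` is primitive if it is not the concatenation of `k ≥ 2` copies of a shorter string. -/
def IsPrimitive {α : Type*} (u : List α) : Prop :=
  ∀ (v : List α) (k : ℕ), 2 ≤ k → v.length < u.length → u ≠ listPow v k

/-- The dihedral orbit of `u`: `{α^j(u) : 0 ≤ j < n} ∪ {α^j(β(u)) : 0 ≤ j < n}`,
where `β` is reversal. -/
noncomputable def dihedralOrbit {α : Type*} [DecidableEq α] (u : List α) : Finset (List α) :=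
  ((Finset.range u.length).image fun j => cyc^[j] u) ∪
    ((Finset.range u.length).image fun j => cyc^[j] u.reverse)

/-- Lucas numbers: `L₀ = 2`, `L₁ = 1`, `Lₙ = Lₙ₋₁ + Lₙ₋₂`. -/
def lucas : ℕ → ℕ
  | 0 => 2
  | 1 => 1
  | n + 2 => lucas (n + 1) + lucas n

/-- All binary strings of length `n`, as a finset of boolean lists. -/
def allBool (n : ℕ) : Finset (List Bool) :=
  (Finset.univ : Finset (Fin n → Bool)).image fun f => List.ofFn f

/-- A Fibonacci string: a binary string with no two consecutive 1s. -/
def IsFibStr (l : List Bool) : Prop := l.Chain' fun a b => a = false ∨ b = false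

/-- The Fibonacci strings of length `n` (vertices of the Fibonacci cube `Γₙ`). -/
noncomputable def fibStrings (n : ℕ) : Finset (List Bool) := (allBool n).filter IsFibStr

/-- A Lucas string: a binary string with no two consecutive 1s which does not both
begin and end with 1. -/
def IsLucasStr (l : List Bool) : Prop :=
  IsFibStr l ∧ ¬(l.head? = some true ∧ l.getLast? = some true)

/-- The Lucas strings of length `n` (vertices of the Lucas cube `Λₙ`). -/
noncomputable def lucasStrings (n : ℕ) : Finset (List Bool) := (allBool n).filter IsLucasStr

/-- Two strings differ in exactly one position. -/
def DifferOne (u v : List Bool) : Prop :=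
  u.length = v.length ∧ (List.zipWith (fun a b => a != b) u v).count true = 1

/-- The edges of the Fibonacci cube `Γₙ`, as unordered pairs of vertices. -/
noncomputable def fibEdges (n : ℕ) : Finset (Finset (List Bool)) :=
  ((fibStrings n ×ˢ fibStrings n).filter fun p => DifferOne p.1 p.2).image fun p => {p.1, p.2}

/-- The edges of the Lucas cube `Λₙ`, as unordered pairs of vertices. -/
noncomputable def lucasEdges (n : ℕ) : Finset (Finset (List Bool)) :=
  ((lucasStrings n ×ˢ lucasStrings n).filter fun p => DifferOne p.1 p.2).image fun p => {p.1, p.2}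

/-- The orbit of a vertex under the reversal map `β`. -/
def revOrbit (u : List Bool) : Finset (List Bool) := {u, u.reverse}

/-- The orbit of an edge under the reversal map `β`, acting by `β({u,v}) = {β(u),β(v)}`. -/
def revEdgeOrbit (e : Finset (List Bool)) : Finset (Finset (List Bool)) :=
  {e, e.image List.reverse}

/-- The orbit of an edge under the dihedral action on strings of length `n`:
`{α^j(e) : 0 ≤ j < n} ∪ {α^j(β(e)) : 0 ≤ j < n}`. -/
noncomputable def dihedralEdgeOrbit (n : ℕ) (e : Finset (List Bool)) :
    Finset (Finset (List Bool)) :=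
  ((Finset.range n).image fun j => e.image fun u => cyc^[j] u) ∪
    ((Finset.range n).image fun j => e.image fun u => cyc^[j] u.reverse)

section RotAux

variable {α : Type*}

theorem cyc_iterate (u : List α) (k : ℕ) :
    cyc^[k] u = u.rotate (k * (u.length - 1)) := by
  induction k with
  | zero => simp
  | succ k ih =>
    rw [Function.iterate_succ_apply', ih, cyc, List.length_rotate, List.rotate_rotate,
      Nat.succ_mul]

/-- The rotation period of `u`: least `k > 0` with `u.rotate k = u`. -/
noncomputable def rp (u : List α) : ℕ := sInf {k | 0 < k ∧ u.rotate k = u}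

theorem rp_spec (u : List α) (hu : u ≠ []) : 0 < rp u ∧ u.rotate (rp u) = u := by
  have h : {k | 0 < k ∧ u.rotate k = u}.Nonempty :=
    ⟨u.length, List.length_pos_iff.2 hu, List.rotate_length u⟩
  exact Nat.sInf_mem h

theorem rotate_rp_mul (u : List α) (hu : u ≠ []) (q : ℕ) : u.rotate (rp u * q) = u := by
  induction q with
  | zero => simp
  | succ q ih => rw [Nat.mul_succ, ← List.rotate_rotate, ih, (rp_spec u hu).2]

theorem rotate_mod_rp (u : List α) (hu : u ≠ []) (k : ℕ) :
    u.rotate k = u.rotate (k % rp u) := by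
  conv_lhs => rw [← Nat.div_add_mod k (rp u)]
  rw [← List.rotate_rotate, rotate_rp_mul u hu]

theorem rotate_eq_self_iff (u : List α) (hu : u ≠ []) (k : ℕ) :
    u.rotate k = u ↔ rp u ∣ k := by
  constructor
  · intro h
    rw [rotate_mod_rp u hu] at h
    rcases Nat.eq_zero_or_pos (k % rp u) with h0 | h0
    · exact Nat.dvd_of_mod_eq_zero h0
    · exfalso
      have hle : rp u ≤ k % rp u := Nat.sInf_le ⟨h0, h⟩
      have hlt : k % rp u < rp u := Nat.mod_lt _ (rp_spec u hu).1
      omega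
  · rintro ⟨q, rfl⟩
    exact rotate_rp_mul u hu q

theorem rp_dvd_length (u : List α) (hu : u ≠ []) : rp u ∣ u.length :=
  (rotate_eq_self_iff u hu _).1 (List.rotate_length u)

theorem period_eq_rp (u : List α) (hu : u ≠ []) : period u = rp u := by
  have hn : 0 < u.length := List.length_pos_iff.2 hu
  have hcop : Nat.Coprime (rp u) (u.length - 1) := by
    have h1 : Nat.gcd (rp u) (u.length - 1) ∣ u.length :=
      (Nat.gcd_dvd_left _ _).trans (rp_dvd_length u hu)
    have h2 : Nat.gcd (rp u) (u.length - 1) ∣ u.length - 1 := Nat.gcd_dvd_right _ _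
    have h3 := Nat.dvd_sub h1 h2
    rw [Nat.sub_sub_self (by omega)] at h3
    exact Nat.dvd_one.mp h3
  have hiff : ∀ k, cyc^[k] u = u ↔ rp u ∣ k := by
    intro k
    rw [cyc_iterate, rotate_eq_self_iff u hu]
    exact ⟨fun h => hcop.dvd_of_dvd_mul_right h, fun h => h.mul_right _⟩
  unfold period
  apply le_antisymm
  · exact Nat.sInf_le ⟨(rp_spec u hu).1, (hiff _).2 dvd_rfl⟩
  · refine le_csInf ⟨u.length, hn, (hiff _).2 (rp_dvd_length u hu)⟩ ?_
    exact fun k hk => Nat.le_of_dvd hk.1 ((hiff k).1 hk.2)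

variable [DecidableEq α]

theorem mem_rotImage (u : List α) (hu : u ≠ []) (v : List α) :
    v ∈ (Finset.range u.length).image (fun i => u.rotate i) ↔ ∃ i, v = u.rotate i := by
  simp only [Finset.mem_image, Finset.mem_range]
  constructor
  · rintro ⟨i, _, rfl⟩; exact ⟨i, rfl⟩
  · rintro ⟨i, rfl⟩
    exact ⟨i % u.length, Nat.mod_lt _ (List.length_pos_iff.2 hu), List.rotate_mod u i⟩

theorem cycImage_eq (u : List α) (hu : u ≠ []) :
    (Finset.range u.length).image (fun j => cyc^[j] u)
      = (Finset.range u.length).image (fun i => u.rotate i) := by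
  have hn : 0 < u.length := List.length_pos_iff.2 hu
  apply Finset.Subset.antisymm
  · intro v hv
    simp only [Finset.mem_image, Finset.mem_range] at hv
    obtain ⟨j, hj, rfl⟩ := hv
    exact (mem_rotImage u hu _).2 ⟨j * (u.length - 1), cyc_iterate u j⟩
  · intro v hv
    obtain ⟨i, rfl⟩ := (mem_rotImage u hu v).1 hv
    simp only [Finset.mem_image, Finset.mem_range]
    refine ⟨(i * (u.length - 1)) % u.length, Nat.mod_lt _ hn, ?_⟩
    rw [cyc_iterate, ← List.rotate_mod, ← List.rotate_mod u i]
    congr 1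
    have hi : i % u.length = i % u.length := rfl
    have hsq : (u.length - 1) * (u.length - 1) ≡ 1 [MOD u.length] := by
      rcases hl : u.length with _ | _ | m
      · omega
      · decide
      · show (m + 2 - 1) * (m + 2 - 1) % (m + 2) = 1 % (m + 2)
        have h : (m + 2 - 1) * (m + 2 - 1) = (m + 2) * m + 1 := by
          have h2 : m + 2 - 1 = m + 1 := by omega
          rw [h2]; ring
        rw [h, Nat.mul_add_mod]
    calc (i * (u.length - 1)) % u.length * (u.length - 1)
        ≡ i * (u.length - 1) * (u.length - 1) [MOD u.length] :=
          (Nat.mod_modEq _ _).mul_right _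
      _ = i * ((u.length - 1) * (u.length - 1)) := by ring
      _ ≡ i * 1 [MOD u.length] := hsq.mul_left i
      _ = i := by ring

theorem revImage_eq (u : List α) (hu : u ≠ []) :
    (Finset.range u.length).image (fun i => u.reverse.rotate i)
      = ((Finset.range u.length).image (fun i => u.rotate i)).image List.reverse := by
  have hrev : u.reverse ≠ [] := by simpa using hu
  ext v
  constructor
  · intro hv
    rw [← @List.length_reverse _ u] at hv
    obtain ⟨i, rfl⟩ := (mem_rotImage u.reverse hrev v).1 hv
    rw [List.rotate_reverse]
    exact Finset.mem_image_of_mem _ ((mem_rotImage u hu _).2 ⟨_, rfl⟩)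
  · intro hv
    obtain ⟨w, hw, rfl⟩ := Finset.mem_image.1 hv
    obtain ⟨i, rfl⟩ := (mem_rotImage u hu w).1 hw
    rw [List.reverse_rotate, ← @List.length_reverse _ u]
    exact (mem_rotImage u.reverse hrev _).2 ⟨_, rfl⟩

theorem card_rotImage (u : List α) (hu : u ≠ []) :
    ((Finset.range u.length).image (fun i => u.rotate i)).card = rp u := by
  have hn : 0 < u.length := List.length_pos_iff.2 hu
  have hrp := rp_spec u hu
  have hle : rp u ≤ u.length := Nat.le_of_dvd hn (rp_dvd_length u hu)
  have himg : (Finset.range u.length).image (fun i => u.rotate i)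
      = (Finset.range (rp u)).image (fun i => u.rotate i) := by
    apply Finset.Subset.antisymm
    · intro v hv
      simp only [Finset.mem_image, Finset.mem_range] at hv ⊢
      obtain ⟨i, hi, rfl⟩ := hv
      exact ⟨i % rp u, Nat.mod_lt _ hrp.1, (rotate_mod_rp u hu i).symm⟩
    · exact Finset.image_subset_image (Finset.range_subset_range.2 hle)
  rw [himg, Finset.card_image_of_injOn, Finset.card_range]
  have key : ∀ i j : ℕ, i < rp u → j < rp u → j ≤ i → u.rotate i = u.rotate j → i = j := by
    intro i j hi hj h hij
    have h1 : u.rotate (i + (u.length - j)) = u.rotate (j + (u.length - j)) := by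
      rw [← List.rotate_rotate, ← List.rotate_rotate, hij]
    rw [Nat.add_sub_cancel' (by omega : j ≤ u.length), List.rotate_length] at h1
    have h2 : rp u ∣ i + (u.length - j) := (rotate_eq_self_iff u hu _).1 h1
    have h3 : rp u ∣ i - j := by
      have h4 := Nat.dvd_sub h2 (rp_dvd_length u hu)
      have heq : i + (u.length - j) - u.length = i - j := by omega
      rwa [heq] at h4
    have h5 := Nat.eq_zero_of_dvd_of_lt h3
    omega
  intro i hi j hj hij
  simp only [Finset.coe_range, Set.mem_Iio] at hi hj
  have hij' : u.rotate i = u.rotate j := hij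
  rcases le_total j i with h | h
  · exact key i j hi hj h hij'
  · exact (key j i hj hi h hij'.symm).symm

end RotAux

/-- If `β(u) = α^j(u)` for some `j`, the dihedral orbit of `u` has `p(u)` elements;
otherwise it has `2·p(u)` elements. -/
theorem card_dihedralOrbit_eq_period_or_two_mul {α : Type*} [DecidableEq α]
    (n : ℕ) (u : List α) (hu : u ≠ []) (hlen : u.length = n) :
    ((∃ j : ℕ, u.reverse = cyc^[j] u) → (dihedralOrbit u).card = period u) ∧
    ((∀ j : ℕ, u.reverse ≠ cyc^[j] u) → (dihedralOrbit u).card = 2 * period u) := by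
  have hn : 0 < u.length := List.length_pos_iff.2 hu
  have hrev : u.reverse ≠ [] := by simpa using hu
  have hDO : dihedralOrbit u =
      (Finset.range u.length).image (fun i => u.rotate i) ∪
        ((Finset.range u.length).image (fun i => u.rotate i)).image List.reverse := by
    rw [dihedralOrbit, cycImage_eq u hu]
    congr 1
    rw [← revImage_eq u hu]
    have h := cycImage_eq u.reverse hrev
    rwa [List.length_reverse] at h
  have hcard : ((Finset.range u.length).image (fun i => u.rotate i)).card = period u := by
    rw [card_rotImage u hu, period_eq_rp u hu]
  have hcard2 : (((Finset.range u.length).image (fun i => u.rotate i)).image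
      List.reverse).card = period u := by
    rw [Finset.card_image_of_injective _ List.reverse_injective, hcard]
  have hmemiff : (∃ j : ℕ, u.reverse = cyc^[j] u) ↔
      u.reverse ∈ (Finset.range u.length).image (fun i => u.rotate i) := by
    constructor
    · rintro ⟨j, hj⟩
      rw [hj, cyc_iterate]
      exact (mem_rotImage u hu _).2 ⟨_, rfl⟩
    · intro h
      rw [← cycImage_eq u hu, Finset.mem_image] at h
      obtain ⟨j, _, hj⟩ := h
      exact ⟨j, hj.symm⟩
  constructor
  · intro hex
    have hmem := hmemiff.1 hex
    have hsub : ((Finset.range u.length).image (fun i => u.rotate i)).image List.reverse ⊆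
        (Finset.range u.length).image (fun i => u.rotate i) := by
      intro v hv
      obtain ⟨w, hw, rfl⟩ := Finset.mem_image.1 hv
      obtain ⟨i, rfl⟩ := (mem_rotImage u hu w).1 hw
      rw [List.reverse_rotate]
      obtain ⟨m, hm⟩ := (mem_rotImage u hu _).1 hmem
      rw [hm, List.rotate_rotate]
      exact (mem_rotImage u hu _).2 ⟨_, rfl⟩
    rw [hDO, Finset.union_eq_left.2 hsub, hcard]
  · intro hall
    have hdisj : Disjoint ((Finset.range u.length).image (fun i => u.rotate i))
        (((Finset.range u.length).image (fun i => u.rotate i)).image List.reverse) := by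
      rw [Finset.disjoint_left]
      intro v hv hv'
      obtain ⟨w, hw, rfl⟩ := Finset.mem_image.1 hv'
      obtain ⟨i, hi⟩ := (mem_rotImage u hu w).1 hw
      obtain ⟨k, hk⟩ := (mem_rotImage u hu _).1 hv
      have heq : u.reverse.rotate (u.length - i % u.length) = u.rotate k := by
        rw [← List.reverse_rotate, ← hi]
        exact hk
      have hrevmem : u.reverse ∈ (Finset.range u.length).image (fun i => u.rotate i) := by
        rw [List.rotate_eq_iff] at heq
        rw [heq, List.rotate_rotate]
        exact (mem_rotImage u hu _).2 ⟨_, rfl⟩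
      obtain ⟨j, hj⟩ := hmemiff.2 hrevmem
      exact hall j hj
    rw [hDO, Finset.card_union_of_disjoint hdisj, hcard, hcard2]
    ring
end

section
/- Let u be a nonempty string over an alphabet and suppose u = v^k, the concatenation of k ≥ 1 copies of a primitive string v. If v is symmetric, then the dihedral orbit of u has exactly p(u) elements; if v is asymmetric, then the dihedral orbit of u has exactly 2·p(u) elements. -/
open scoped Classical

section DihedralAux

namespace DihedralAux

variable {α : Type*}

theorem listPow_zero (v : List α) : listPow v 0 = [] := rfl

theorem listPow_succ (v : List α) (k : ℕ) : listPow v (k+1) = v ++ listPow v k := by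
  simp [listPow, List.replicate_succ]

theorem listPow_comm (v : List α) (k : ℕ) : v ++ listPow v k = listPow v k ++ v := by
  induction k with
  | zero => simp [listPow_zero]
  | succ k ih => rw [listPow_succ, ih, ← List.append_assoc, ih]

theorem listPow_succ' (v : List α) (k : ℕ) : listPow v (k+1) = listPow v k ++ v := by
  rw [listPow_succ, listPow_comm]

theorem listPow_one (v : List α) : listPow v 1 = v := by simp [listPow_succ, listPow_zero]

theorem listPow_nil (k : ℕ) : listPow ([] : List α) k = [] := by
  induction k <;> simp [listPow_zero, listPow_succ, *]

theorem length_listPow (v : List α) (k : ℕ) : (listPow v k).length = k * v.length := by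
  induction k with
  | zero => simp [listPow_zero]
  | succ k ih => rw [listPow_succ]; simp [ih]; ring

theorem listPow_inj (x y : List α) (k : ℕ) (hk : 1 ≤ k) (hlen : x.length = y.length)
    (h : listPow x k = listPow y k) : x = y := by
  obtain ⟨m, rfl⟩ : ∃ m, k = m + 1 := ⟨k-1, by omega⟩
  rw [listPow_succ, listPow_succ] at h
  have h2 := congrArg (List.take x.length) h
  rwa [List.take_left, hlen, List.take_left] at h2

theorem reverse_listPow (v : List α) (k : ℕ) :
    (listPow v k).reverse = listPow v.reverse k := by
  induction k with
  | zero => rfl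
  | succ k ih => rw [listPow_succ, List.reverse_append, ih, ← listPow_succ']

theorem listPow_append_swap (a b : List α) (k : ℕ) :
    listPow (a ++ b) k ++ a = a ++ listPow (b ++ a) k := by
  induction k with
  | zero => simp [listPow_zero]
  | succ k ih =>
    calc listPow (a++b) (k+1) ++ a = (listPow (a++b) k ++ a) ++ (b ++ a) := by
          rw [listPow_succ']; simp [List.append_assoc]
      _ = (a ++ listPow (b++a) k) ++ (b ++ a) := by rw [ih]
      _ = a ++ listPow (b++a) (k+1) := by rw [listPow_succ']; simp [List.append_assoc]

theorem rotate_listPow (v : List α) (k r : ℕ) (hr : r ≤ v.length) (hk : 1 ≤ k) :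
    (listPow v k).rotate r = listPow (v.rotate r) k := by
  obtain ⟨k, rfl⟩ : ∃ k', k = k'+1 := ⟨k-1, by omega⟩
  have hle : r ≤ (listPow v (k+1)).length := by
    rw [length_listPow]
    calc r ≤ v.length := hr
      _ ≤ (k+1) * v.length := by nlinarith
  rw [List.rotate_eq_drop_append_take hle, List.rotate_eq_drop_append_take hr]
  rw [listPow_succ, List.drop_append_of_le_length hr, List.take_append_of_le_length hr]
  have hv : listPow v k = listPow (v.take r ++ v.drop r) k := by rw [List.take_append_drop]
  rw [hv]
  rw [listPow_succ']
  conv_rhs => rw [← List.append_assoc, listPow_append_swap, List.append_assoc]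
  rw [List.append_assoc]

theorem rotate_listPow_length (v : List α) (k : ℕ) (hk : 1 ≤ k) :
    (listPow v k).rotate v.length = listPow v k := by
  by_cases hv : v = []
  · subst hv; simp [listPow_nil]
  · rw [rotate_listPow v k v.length le_rfl hk, List.rotate_length]

theorem take_listPow_mul (v : List α) : ∀ j k, j ≤ k →
    (listPow v k).take (j * v.length) = listPow v j := by
  intro j
  induction j with
  | zero => intro k _; simp [listPow_zero]
  | succ j ih =>
    intro k hk
    obtain ⟨k, rfl⟩ : ∃ k', k = k'+1 := ⟨k-1, by omega⟩
    rw [listPow_succ]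
    have h1 : (j+1) * v.length = v.length + j * v.length := by ring
    rw [h1, List.take_length_add_append, ih k (by omega), ← listPow_succ]

/-- The least positive `m` with `u.rotate m = u`. -/
noncomputable def rotp (u : List α) : ℕ := sInf {m | 0 < m ∧ u.rotate m = u}

theorem rotp_spec {u : List α} (hu : u ≠ []) : 0 < rotp u ∧ u.rotate (rotp u) = u :=
  Nat.sInf_mem (⟨u.length, List.length_pos_iff.mpr hu, List.rotate_length u⟩ :
    Set.Nonempty {m | 0 < m ∧ u.rotate m = u})

theorem rotp_le {u : List α} {m : ℕ} (h0 : 0 < m) (h : u.rotate m = u) : rotp u ≤ m :=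
  Nat.sInf_le ⟨h0, h⟩

theorem rotate_mul_rotp {u : List α} (hu : u ≠ []) (q : ℕ) :
    u.rotate (q * rotp u) = u := by
  induction q with
  | zero => simp
  | succ q ih =>
    have h : (q+1) * rotp u = q * rotp u + rotp u := by ring
    rw [h, ← List.rotate_rotate, ih, (rotp_spec hu).2]

theorem rotate_eq_self_iff {u : List α} (hu : u ≠ []) (m : ℕ) :
    u.rotate m = u ↔ rotp u ∣ m := by
  constructor
  · intro h
    have hd := rotp_spec hu
    have h2 : u.rotate (m % rotp u) = u := by
      have h3 : u.rotate m = (u.rotate ((m / rotp u) * rotp u)).rotate (m % rotp u) := by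
        rw [List.rotate_rotate]; congr 1
        rw [mul_comm]; exact (Nat.div_add_mod m (rotp u)).symm
      rw [h3, rotate_mul_rotp hu] at h
      exact h
    by_contra hnd
    have hne0 : m % rotp u ≠ 0 := fun h0 => hnd (Nat.dvd_iff_mod_eq_zero.mpr h0)
    have h4 := rotp_le (Nat.pos_of_ne_zero hne0) h2
    have h5 := Nat.mod_lt m hd.1
    omega
  · rintro ⟨q, rfl⟩; rw [mul_comm]; exact rotate_mul_rotp hu q

theorem rotp_dvd_length {u : List α} (hu : u ≠ []) : rotp u ∣ u.length :=
  (rotate_eq_self_iff hu _).mp (List.rotate_length u)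

theorem cyc_iterate (u : List α) (j : ℕ) : cyc^[j] u = u.rotate (j * (u.length - 1)) := by
  induction j with
  | zero => simp
  | succ j ih =>
    rw [Function.iterate_succ_apply', ih]
    show (u.rotate (j * (u.length - 1))).rotate ((u.rotate (j * (u.length - 1))).length - 1)
        = u.rotate ((j+1) * (u.length - 1))
    rw [List.length_rotate, List.rotate_rotate]
    congr 1; ring

theorem period_eq_rotp {u : List α} (hu : u ≠ []) : period u = rotp u := by
  have hn : 0 < u.length := List.length_pos_iff.mpr hu
  have hdn : rotp u ∣ u.length := rotp_dvd_length hu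
  have key : ∀ k, cyc^[k] u = u ↔ rotp u ∣ k := by
    intro k
    rw [cyc_iterate, rotate_eq_self_iff hu]
    constructor
    · intro h
      have h2 : rotp u ∣ k * u.length := hdn.mul_left k
      have h3 : k * u.length = k * (u.length - 1) + k := by
        obtain ⟨m, hm⟩ : ∃ m, u.length = m + 1 := ⟨u.length - 1, by omega⟩
        rw [hm]; simp [Nat.mul_succ]
      rw [h3] at h2
      exact (Nat.dvd_add_right h).mp h2
    · intro h; exact h.mul_right _
  have h1 : {k | 0 < k ∧ cyc^[k] u = u} = {k | 0 < k ∧ rotp u ∣ k} := by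
    ext k; simp [key]
  unfold period
  rw [h1]
  apply le_antisymm
  · exact Nat.sInf_le ⟨(rotp_spec hu).1, dvd_refl _⟩
  · have hmem := Nat.sInf_mem (⟨rotp u, (rotp_spec hu).1, dvd_refl _⟩ :
      Set.Nonempty {k | 0 < k ∧ rotp u ∣ k})
    exact Nat.le_of_dvd hmem.1 hmem.2

theorem decomp (d : ℕ) (hd : 0 < d) : ∀ (N : ℕ) (u : List α), u.length ≤ N →
    u.rotate d = u → d ∣ u.length → u = listPow (u.take d) (u.length / d) := by
  intro N
  induction N with
  | zero =>
    intro u h _ _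
    have h0 : u = [] := List.eq_nil_of_length_eq_zero (by omega)
    subst h0; simp [listPow_zero]
  | succ N ih =>
    intro u hlen hrot hdvd
    by_cases h0 : u.length = 0
    · have h1 : u = [] := List.eq_nil_of_length_eq_zero h0
      subst h1; simp [listPow_zero]
    have hdlen : d ≤ u.length := Nat.le_of_dvd (by omega) hdvd
    rcases eq_or_lt_of_le hdlen with heq | hlt
    · have h1 : u.length / d = 1 := by rw [← heq]; exact Nat.div_self hd
      rw [h1, List.take_of_length_le (by omega)]
      simp [listPow_succ, listPow_zero]
    · obtain ⟨q, hq⟩ := hdvd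
      have hq2 : 2 ≤ q := by
        by_contra h
        push_neg at h
        interval_cases q <;> omega
      have hdrop : u.drop d ++ u.take d = u := by
        rw [← List.rotate_eq_drop_append_take hdlen]; exact hrot
      have hdlen' : (u.drop d).length = u.length - d := List.length_drop
      have h2d : 2 * d ≤ u.length := by nlinarith
      have hd2 : d ≤ (u.drop d).length := by omega
      have htake' : (u.drop d).take d = u.take d := by
        have h3 := congrArg (List.take d) hdrop
        rwa [List.take_append_of_le_length hd2] at h3
      have hdrop' : (u.drop d).drop d ++ u.take d = u.drop d := by
        have h3 := congrArg (List.drop d) hdrop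
        rwa [List.drop_append_of_le_length hd2] at h3
      have hrot' : (u.drop d).rotate d = u.drop d := by
        rw [List.rotate_eq_drop_append_take hd2, htake', hdrop']
      have hdvd' : d ∣ (u.drop d).length := by
        rw [hdlen']; exact Nat.dvd_sub ⟨q, hq⟩ dvd_rfl
      have hrec := ih (u.drop d) (by omega) hrot' hdvd'
      rw [htake'] at hrec
      have hmul : d * q - d = d * (q - 1) := by
        cases q with
        | zero => omega
        | succ q => simp [Nat.mul_succ]
      have hql : (u.drop d).length / d = q - 1 := by
        rw [hdlen', hq, hmul, Nat.mul_div_cancel_left _ hd]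
      have hq1 : u.length / d = q := by rw [hq, Nat.mul_div_cancel_left _ hd]
      rw [hq1]
      obtain ⟨p, rfl⟩ : ∃ p, q = p + 1 := ⟨q-1, by omega⟩
      rw [listPow_succ]
      conv_lhs => rw [← List.take_append_drop d u]
      rw [hrec, hql]
      simp

theorem rotp_listPow_primitive (v : List α) (hv : IsPrimitive v) (hvne : v ≠ [])
    (k : ℕ) (hk : 1 ≤ k) : rotp (listPow v k) = v.length := by
  have hvpos : 0 < v.length := List.length_pos_iff.mpr hvne
  have hlp : 0 < (listPow v k).length := by rw [length_listPow]; positivity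
  have hune : listPow v k ≠ [] := List.length_pos_iff.mp hlp
  have hrot := rotate_listPow_length v k hk
  have hdvd : rotp (listPow v k) ∣ v.length := (rotate_eq_self_iff hune _).mp hrot
  have hdpos : 0 < rotp (listPow v k) := (rotp_spec hune).1
  have hdle : rotp (listPow v k) ≤ v.length := Nat.le_of_dvd hvpos hdvd
  rcases eq_or_lt_of_le hdle with h|h
  · exact h
  exfalso
  have hdn : rotp (listPow v k) ∣ (listPow v k).length := rotp_dvd_length hune
  have hdec := decomp (rotp (listPow v k)) hdpos (listPow v k).length (listPow v k)
    le_rfl ((rotp_spec hune).2) hdn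
  obtain ⟨m, hm⟩ := hdvd
  have hm2 : 2 ≤ m := by
    by_contra h2
    push_neg at h2
    interval_cases m <;> omega
  have hvtake : (listPow v k).take v.length = v := by
    obtain ⟨k, rfl⟩ : ∃ k', k = k'+1 := ⟨k-1, by omega⟩
    rw [listPow_succ]; exact List.take_left
  have hwlen : ((listPow v k).take (rotp (listPow v k))).length = rotp (listPow v k) := by
    rw [List.length_take]
    refine Nat.min_eq_left (le_trans hdle ?_)
    rw [length_listPow]; nlinarith
  have hmle : m ≤ (listPow v k).length / rotp (listPow v k) := by
    refine (Nat.le_div_iff_mul_le hdpos).mpr ?_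
    rw [length_listPow, mul_comm m (rotp (listPow v k)), ← hm]
    nlinarith
  have hv2 : v = listPow ((listPow v k).take (rotp (listPow v k))) m := by
    have h2 : v = (listPow ((listPow v k).take (rotp (listPow v k)))
        ((listPow v k).length / rotp (listPow v k))).take v.length := by
      rw [← hdec, hvtake]
    have h4 : (listPow ((listPow v k).take (rotp (listPow v k)))
        ((listPow v k).length / rotp (listPow v k))).take v.length
        = listPow ((listPow v k).take (rotp (listPow v k))) m := by
      have h5 : v.length = m * ((listPow v k).take (rotp (listPow v k))).length := by
        rw [hwlen, hm]; ring
      rw [h5]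
      exact take_listPow_mul _ m _ hmle
    exact h2.trans h4
  exact hv _ m hm2 (by rw [hwlen]; exact h) hv2

variable [DecidableEq α]

/-- The set of rotations of `u`. -/
noncomputable def rotSet (u : List α) : Finset (List α) :=
  (Finset.range u.length).image (fun j => u.rotate j)

theorem mem_rotSet {u x : List α} (hu : u ≠ []) :
    x ∈ rotSet u ↔ ∃ m, u.rotate m = x := by
  simp only [rotSet, Finset.mem_image, Finset.mem_range]
  constructor
  · rintro ⟨j, _, rfl⟩; exact ⟨j, rfl⟩
  · rintro ⟨m, rfl⟩
    exact ⟨m % u.length, Nat.mod_lt _ (List.length_pos_iff.mpr hu), List.rotate_mod u m⟩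

theorem rotate_inv (u : List α) (hu : u ≠ []) (m : ℕ) :
    (u.rotate m).rotate (u.length - m % u.length) = u := by
  have hn : 0 < u.length := List.length_pos_iff.mpr hu
  rw [List.rotate_rotate]
  have h1 : m % u.length + u.length * (m / u.length) = m := Nat.mod_add_div m u.length
  have h2 : m % u.length < u.length := Nat.mod_lt _ hn
  have h3 : m + (u.length - m % u.length) = u.length * (m / u.length + 1) := by
    rw [Nat.mul_add, mul_one]; omega
  rw [h3, ← List.rotate_mod, Nat.mul_mod_right, List.rotate_zero]

theorem exists_rotate_symm {u x : List α} (hu : u ≠ []) (h : ∃ m, u.rotate m = x) :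
    ∃ j, x.rotate j = u := by
  obtain ⟨m, rfl⟩ := h
  exact ⟨_, rotate_inv u hu m⟩

theorem rotSet_rotate (u : List α) (hu : u ≠ []) (m : ℕ) :
    rotSet (u.rotate m) = rotSet u := by
  have h1 : u.rotate m ≠ [] := by
    intro h; apply hu; rwa [List.rotate_eq_nil_iff] at h
  ext x
  rw [mem_rotSet h1, mem_rotSet hu]
  constructor
  · rintro ⟨j, rfl⟩; exact ⟨m + j, (List.rotate_rotate u m j).symm⟩
  · rintro ⟨j, rfl⟩
    obtain ⟨i, hi⟩ := exists_rotate_symm hu ⟨m, rfl⟩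
    exact ⟨i + j, by rw [← List.rotate_rotate, hi]⟩

theorem card_rotSet (u : List α) (hu : u ≠ []) : (rotSet u).card = rotp u := by
  have hn : 0 < u.length := List.length_pos_iff.mpr hu
  have hspec := rotp_spec hu
  have hdn : rotp u ∣ u.length := rotp_dvd_length hu
  have hdle : rotp u ≤ u.length := Nat.le_of_dvd hn hdn
  have hset : rotSet u = (Finset.range (rotp u)).image (fun j => u.rotate j) := by
    apply Finset.ext; intro x
    simp only [rotSet, Finset.mem_image, Finset.mem_range]
    constructor
    · rintro ⟨j, hj, rfl⟩
      refine ⟨j % rotp u, Nat.mod_lt _ hspec.1, ?_⟩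
      have h4 : u.rotate j = (u.rotate ((j / rotp u) * rotp u)).rotate (j % rotp u) := by
        rw [List.rotate_rotate]; congr 1
        rw [mul_comm]; exact (Nat.div_add_mod j (rotp u)).symm
      rw [h4, rotate_mul_rotp hu]
    · rintro ⟨j, hj, rfl⟩; exact ⟨j, lt_of_lt_of_le hj hdle, rfl⟩
  rw [hset, Finset.card_image_of_injOn, Finset.card_range]
  have key : ∀ i j, i < rotp u → j < rotp u → i ≤ j → u.rotate i = u.rotate j → j ≤ i := by
    intro i j hi hj hij h
    have h2 : u = (u.rotate j).rotate (u.length - i) := by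
      rw [← h, List.rotate_rotate]
      have h5 : i + (u.length - i) = u.length := by omega
      rw [h5, List.rotate_length]
    rw [List.rotate_rotate] at h2
    have h4 : rotp u ∣ j + (u.length - i) := (rotate_eq_self_iff hu _).mp h2.symm
    have h5 : rotp u ∣ (j - i) := by
      have h6 : j + (u.length - i) = u.length + (j - i) := by omega
      rw [h6] at h4
      exact (Nat.dvd_add_right hdn).mp h4
    rcases Nat.eq_zero_or_pos (j - i) with h7|h7
    · omega
    · have := Nat.le_of_dvd h7 h5; omega
  intro i hi j hj hij
  simp only [Finset.coe_range, Set.mem_Iio] at hi hj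
  rcases le_total i j with h|h
  · have := key i j hi hj h hij; omega
  · have := key j i hj hi h hij.symm; omega

theorem image_cyc_eq_rotSet (u : List α) (hu : u ≠ []) :
    (Finset.range u.length).image (fun j => cyc^[j] u) = rotSet u := by
  have hn : 0 < u.length := List.length_pos_iff.mpr hu
  ext x
  simp only [Finset.mem_image, Finset.mem_range, rotSet]
  constructor
  · rintro ⟨j, hj, rfl⟩
    rw [cyc_iterate]
    exact ⟨(j * (u.length - 1)) % u.length, Nat.mod_lt _ hn, List.rotate_mod u _⟩
  · rintro ⟨j, hj, rfl⟩
    rcases Nat.eq_zero_or_pos j with rfl | hjpos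
    · exact ⟨0, hn, by simp⟩
    · refine ⟨u.length - j, by omega, ?_⟩
      rw [cyc_iterate]
      obtain ⟨a, ha⟩ : ∃ a, u.length = j + a + 1 := ⟨u.length - j - 1, by omega⟩
      have h1 : (u.length - j) * (u.length - 1) = u.length * a + j := by
        rw [ha]
        have e1 : j + a + 1 - j = a + 1 := by omega
        have e2 : j + a + 1 - 1 = j + a := by omega
        rw [e1, e2]; ring
      rw [h1, ← List.rotate_mod]
      have h2 : (u.length * a + j) % u.length = j := by
        rw [Nat.mul_add_mod]
        exact Nat.mod_eq_of_lt hj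
      rw [h2]

theorem dihedralOrbit_eq (u : List α) (hu : u ≠ []) :
    dihedralOrbit u = rotSet u ∪ rotSet u.reverse := by
  have hur : u.reverse ≠ [] := by simpa using hu
  unfold dihedralOrbit
  rw [image_cyc_eq_rotSet u hu]
  congr 1
  rw [← image_cyc_eq_rotSet u.reverse hur, List.length_reverse]

end DihedralAux

end DihedralAux

open DihedralAux in
/-- Let `u = v^k` with `k ≥ 1` and `v` primitive. If `v` is symmetric then the dihedral
orbit of `u` has `p(u)` elements; if `v` is asymmetric it has `2·p(u)` elements. -/
theorem card_dihedralOrbit_of_pow_primitive {α : Type*} [DecidableEq α]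
    (u v : List α) (k : ℕ) (hu : u ≠ []) (hk : 1 ≤ k)
    (hv : IsPrimitive v) (huv : u = listPow v k) :
    ((dihedralOrbit v).card < 2 * v.length → (dihedralOrbit u).card = period u) ∧
    ((dihedralOrbit v).card = 2 * v.length → (dihedralOrbit u).card = 2 * period u) := by
  classical
  have hvne : v ≠ [] := by
    rintro rfl
    exact hu (by rw [huv, listPow_nil])
  have hvpos : 0 < v.length := List.length_pos_iff.mpr hvne
  have hnpos : 0 < u.length := List.length_pos_iff.mpr hu
  have hrotpu : rotp u = v.length := by
    rw [huv]; exact rotp_listPow_primitive v hv hvne k hk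
  have hperiod : period u = v.length := by rw [period_eq_rotp hu, hrotpu]
  have hurev : u.reverse = listPow v.reverse k := by rw [huv, reverse_listPow]
  have hvrevprim : IsPrimitive v.reverse := by
    intro w m hm hlen heq
    apply hv w.reverse m hm (by simpa using hlen)
    have h2 := congrArg List.reverse heq
    rwa [List.reverse_reverse, reverse_listPow] at h2
  have hvrevne : v.reverse ≠ [] := by simpa using hvne
  have hurevne : u.reverse ≠ [] := by simpa using hu
  have hrotprev : rotp u.reverse = v.length := by
    rw [hurev]
    have h2 := rotp_listPow_primitive v.reverse hvrevprim hvrevne k hk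
    simpa using h2
  have hcardA : (rotSet u).card = v.length := by rw [card_rotSet u hu, hrotpu]
  have hcardB : (rotSet u.reverse).card = v.length := by
    rw [card_rotSet _ hurevne, hrotprev]
  have hrotpv : rotp v = v.length := by
    have h2 := rotp_listPow_primitive v hv hvne 1 le_rfl
    rwa [listPow_one] at h2
  have hrotpvrev : rotp v.reverse = v.length := by
    have h2 := rotp_listPow_primitive v.reverse hvrevprim hvrevne 1 le_rfl
    rw [listPow_one] at h2
    simpa using h2
  have hcardAv : (rotSet v).card = v.length := by rw [card_rotSet v hvne, hrotpv]
  have hcardBv : (rotSet v.reverse).card = v.length := by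
    rw [card_rotSet _ hvrevne, hrotpvrev]
  have hdov : dihedralOrbit v = rotSet v ∪ rotSet v.reverse := dihedralOrbit_eq v hvne
  have hdou : dihedralOrbit u = rotSet u ∪ rotSet u.reverse := dihedralOrbit_eq u hu
  have hinter := Finset.card_union_add_card_inter (rotSet v) (rotSet v.reverse)
  constructor
  · intro hsym
    rw [hdov] at hsym
    have hne : (rotSet v ∩ rotSet v.reverse).Nonempty := by
      rw [← Finset.card_pos]; omega
    obtain ⟨x, hx⟩ := hne
    rw [Finset.mem_inter] at hx
    obtain ⟨hx1, hx2⟩ := hx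
    rw [mem_rotSet hvne] at hx1
    rw [mem_rotSet hvrevne] at hx2
    obtain ⟨i, hi⟩ := hx1
    obtain ⟨j, hj⟩ := hx2
    have hex : ∃ m, v.rotate m = v.reverse := by
      obtain ⟨c, hc⟩ := exists_rotate_symm hvrevne ⟨j, hj⟩
      exact ⟨i + c, by rw [← List.rotate_rotate, hi, hc]⟩
    obtain ⟨m, hm⟩ := hex
    have hm' : v.rotate (m % v.length) = v.reverse := by rw [List.rotate_mod]; exact hm
    have hmle : m % v.length ≤ v.length := le_of_lt (Nat.mod_lt _ hvpos)
    have hrevrot : u.reverse = u.rotate (m % v.length) := by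
      rw [hurev, ← hm']
      conv_rhs => rw [huv]
      rw [rotate_listPow v k _ hmle hk]
    have hsetEq : rotSet u.reverse = rotSet u := by
      rw [hrevrot, rotSet_rotate u hu]
    rw [hdou, hsetEq, Finset.union_self, hcardA, hperiod]
  · intro hasym
    rw [hdov] at hasym
    have hinterv : rotSet v ∩ rotSet v.reverse = ∅ := by
      rw [← Finset.card_eq_zero]; omega
    have hdisj : Disjoint (rotSet u) (rotSet u.reverse) := by
      rw [Finset.disjoint_left]
      intro x hxA hxB
      rw [mem_rotSet hu] at hxA
      rw [mem_rotSet hurevne] at hxB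
      obtain ⟨i, hi⟩ := hxA
      obtain ⟨j, hj⟩ := hxB
      have hex : ∃ m, u.rotate m = u.reverse := by
        obtain ⟨c, hc⟩ := exists_rotate_symm hurevne ⟨j, hj⟩
        exact ⟨i + c, by rw [← List.rotate_rotate, hi, hc]⟩
      obtain ⟨m, hm⟩ := hex
      have hm2 : u.rotate (m % u.length) = u.reverse := by rw [List.rotate_mod]; exact hm
      have hr : u.rotate ((m % u.length) % v.length) = u.reverse := by
        have h4 : u.rotate (m % u.length)
            = (u.rotate (((m % u.length) / v.length) * v.length)).rotate
              ((m % u.length) % v.length) := by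
          rw [List.rotate_rotate]; congr 1
          rw [mul_comm]; exact (Nat.div_add_mod (m % u.length) v.length).symm
        have hmul : u.rotate (((m % u.length) / v.length) * v.length) = u := by
          apply (rotate_eq_self_iff hu _).mpr
          rw [hrotpu]; exact dvd_mul_left _ _
        rw [← hm2, h4, hmul]
      obtain ⟨r, hrle, hru⟩ : ∃ r, r ≤ v.length ∧ u.rotate r = u.reverse :=
        ⟨(m % u.length) % v.length, le_of_lt (Nat.mod_lt _ hvpos), hr⟩
      have heq2 : listPow v.reverse k = listPow (v.rotate r) k := by
        rw [← hurev, ← hru]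
        conv_lhs => rw [huv]
        rw [rotate_listPow v k r hrle hk]
      have hvv : v.reverse = v.rotate r :=
        listPow_inj _ _ k hk (by simp) heq2
      have hmem1 : v.reverse ∈ rotSet v := (mem_rotSet hvne).mpr ⟨_, hvv.symm⟩
      have hmem2 : v.reverse ∈ rotSet v.reverse :=
        (mem_rotSet hvrevne).mpr ⟨0, List.rotate_zero _⟩
      have hboth : v.reverse ∈ rotSet v ∩ rotSet v.reverse :=
        Finset.mem_inter.mpr ⟨hmem1, hmem2⟩
      rw [hinterv] at hboth
      exact absurd hboth (Finset.notMem_empty _)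
    rw [hdou, Finset.card_union_of_disjoint hdisj, hcardA, hcardB, hperiod]
    ring
end

section
/- For every integer k ≥ 1: the number of palindromic Fibonacci strings of length 2k equals F_{k+1}, and the number of palindromic Fibonacci strings of length 2k+1 equals F_{k+3}; among the palindromic Fibonacci strings of length 2k, exactly F_k begin with 0 and exactly F_{k−1} begin with 1; among the palindromic Fibonacci strings of length 2k+1, exactly F_{k+2} begin with 0 and exactly F_{k+1} begin with 1. -/
open scoped Classical

section CountFibPalAux

open List

private lemma mem_allBool' {l : List Bool} {n : ℕ} : l ∈ allBool n ↔ l.length = n := by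
  constructor
  · intro h
    obtain ⟨f, -, rfl⟩ := Finset.mem_image.mp h
    simp
  · rintro rfl
    exact Finset.mem_image.mpr ⟨l.get, Finset.mem_univ _, List.ofFn_get l⟩

private lemma mem_fibStrings' {l : List Bool} {n : ℕ} :
    l ∈ fibStrings n ↔ l.length = n ∧ IsFibStr l := by
  simp [fibStrings, Finset.mem_filter, mem_allBool']

private lemma isFibStr_reverse {l : List Bool} (h : IsFibStr l) : IsFibStr l.reverse := by
  rw [IsFibStr, List.Chain', List.isChain_reverse]
  exact h.imp fun a b hab => hab.symm

/-- Fibonacci strings of length `k` with prescribed first and last letters. -/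
private noncomputable def Sse (k : ℕ) (s e : Bool) : Finset (List Bool) :=
  (fibStrings k).filter fun l => l.head? = some s ∧ l.getLast? = some e

private lemma mem_Sse {l : List Bool} {k : ℕ} {s e : Bool} :
    l ∈ Sse k s e ↔ l.length = k ∧ IsFibStr l ∧ l.head? = some s ∧ l.getLast? = some e := by
  simp [Sse, Finset.mem_filter, mem_fibStrings', and_assoc]

/-- Fibonacci strings of length `k` with prescribed first letter. -/
private noncomputable def Hh (k : ℕ) (s : Bool) : Finset (List Bool) :=
  (fibStrings k).filter fun l => l.head? = some s

private lemma mem_Hh {l : List Bool} {k : ℕ} {s : Bool} :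
    l ∈ Hh k s ↔ l.length = k ∧ IsFibStr l ∧ l.head? = some s := by
  simp [Hh, Finset.mem_filter, mem_fibStrings', and_assoc]

private lemma Sse_one (s e : Bool) : Sse 1 s e = if s = e then {[s]} else ∅ := by
  ext l
  simp only [mem_Sse]
  constructor
  · rintro ⟨hlen, -, hh, hl⟩
    obtain ⟨a, rfl⟩ := List.length_eq_one_iff.mp hlen
    simp only [List.head?_cons, Option.some.injEq] at hh
    simp only [List.getLast?_singleton, Option.some.injEq] at hl
    subst hh; subst hl
    simp
  · intro h
    split_ifs at h with hse
    · subst hse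
      rw [Finset.mem_singleton] at h; subst h
      exact ⟨rfl, List.isChain_singleton _, rfl, rfl⟩
    · simp at h

private lemma fib_cons_false {u : List Bool} :
    IsFibStr (false :: u) ↔ IsFibStr u := by
  rw [IsFibStr, List.Chain', List.isChain_cons, IsFibStr, List.Chain']
  simp

private lemma fib_cons_true {u : List Bool} :
    IsFibStr (true :: u) ↔ (∀ y ∈ u.head?, y = false) ∧ IsFibStr u := by
  rw [IsFibStr, List.Chain', List.isChain_cons, IsFibStr, List.Chain']
  simp

private lemma Sse_succ_false {k : ℕ} (hk : 1 ≤ k) (e : Bool) :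
    Sse (k + 1) false e = (Sse k false e ∪ Sse k true e).image (List.cons false) := by
  ext l
  simp only [Finset.mem_image, Finset.mem_union, mem_Sse]
  constructor
  · rintro ⟨hlen, hfib, hh, hl⟩
    cases l with
    | nil => simp at hh
    | cons a u =>
      simp only [List.head?_cons, Option.some.injEq] at hh
      subst hh
      cases u with
      | nil => simp at hlen; omega
      | cons b v =>
        refine ⟨b :: v, ?_, rfl⟩
        have hfib' : IsFibStr (b :: v) := fib_cons_false.mp hfib
        have hlen' : (b :: v).length = k := by
          simp only [List.length_cons] at hlen ⊢; omega
        have hl' : (b :: v).getLast? = some e := by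
          rwa [List.getLast?_cons_cons] at hl
        cases b
        · exact Or.inl ⟨hlen', hfib', rfl, hl'⟩
        · exact Or.inr ⟨hlen', hfib', rfl, hl'⟩
  · rintro ⟨u, hu, rfl⟩
    have h : u.length = k ∧ IsFibStr u ∧ u.getLast? = some e := by
      rcases hu with ⟨h1, h2, h3, h4⟩ | ⟨h1, h2, h3, h4⟩ <;> exact ⟨h1, h2, h4⟩
    obtain ⟨h1, h2, h4⟩ := h
    cases u with
    | nil => simp at h1; omega
    | cons b v =>
      refine ⟨by simp only [List.length_cons] at h1 ⊢; omega, fib_cons_false.mpr h2, rfl, ?_⟩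
      rwa [List.getLast?_cons_cons]

private lemma Sse_succ_true {k : ℕ} (hk : 1 ≤ k) (e : Bool) :
    Sse (k + 1) true e = (Sse k false e).image (List.cons true) := by
  ext l
  simp only [Finset.mem_image, mem_Sse]
  constructor
  · rintro ⟨hlen, hfib, hh, hl⟩
    cases l with
    | nil => simp at hh
    | cons a u =>
      simp only [List.head?_cons, Option.some.injEq] at hh
      subst hh
      cases u with
      | nil => simp at hlen; omega
      | cons b v =>
        obtain ⟨hhead, hfib'⟩ := fib_cons_true.mp hfib
        have hb : b = false := hhead b rfl
        subst hb
        refine ⟨false :: v, ⟨?_, hfib', rfl, ?_⟩, rfl⟩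
        · simp only [List.length_cons] at hlen ⊢; omega
        · rwa [List.getLast?_cons_cons] at hl
  · rintro ⟨u, hu, rfl⟩
    obtain ⟨h1, h2, h3, h4⟩ := mem_Sse.mp (mem_Sse.mpr hu)
    cases u with
    | nil => simp at h3
    | cons b v =>
      simp only [List.head?_cons, Option.some.injEq] at h3
      subst h3
      refine ⟨?_, ?_, rfl, ?_⟩
      · simp only [List.length_cons] at h1 ⊢; omega
      · exact fib_cons_true.mpr ⟨fun y hy => by simp only [List.head?_cons,
          Option.mem_def, Option.some.injEq] at hy; exact hy.symm, h2⟩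
      · rwa [List.getLast?_cons_cons]

private lemma Sse_head_disj (k : ℕ) (e : Bool) :
    Disjoint (Sse k false e) (Sse k true e) := by
  rw [Finset.disjoint_left]
  intro l h1 h2
  have := (mem_Sse.mp h1).2.2.1.symm.trans (mem_Sse.mp h2).2.2.1
  simp at this

private lemma Sse_last_disj (k : ℕ) (s : Bool) :
    Disjoint (Sse k s false) (Sse k s true) := by
  rw [Finset.disjoint_left]
  intro l h1 h2
  have := (mem_Sse.mp h1).2.2.2.symm.trans (mem_Sse.mp h2).2.2.2
  simp at this

private lemma fib_sum (a : ℕ) : Nat.fib a + Nat.fib (a + 1) = Nat.fib (a + 2) :=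
  (Nat.fib_add_two).symm

private lemma fib_sum' (a : ℕ) : Nat.fib (a + 1) + Nat.fib a = Nat.fib (a + 2) := by
  rw [Nat.add_comm]; exact fib_sum a

private lemma Sse_card {k : ℕ} (hk : 1 ≤ k) :
    (Sse k false false).card = Nat.fib k ∧
    (Sse k false true).card = Nat.fib (k - 1) ∧
    (Sse k true false).card = Nat.fib (k - 1) ∧
    (Sse k true true).card = (if k = 1 then 1 else Nat.fib (k - 2)) := by
  induction k with
  | zero => omega
  | succ n ih =>
    rcases Nat.eq_zero_or_pos n with hn | hn
    · subst hn
      refine ⟨?_, ?_, ?_, ?_⟩ <;> simp [Sse_one]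
    · obtain ⟨A, B, C, D⟩ := ih hn
      have cardf : ∀ e, (Sse (n + 1) false e).card
          = (Sse n false e).card + (Sse n true e).card := by
        intro e
        rw [Sse_succ_false hn e, Finset.card_image_of_injective _ (List.cons_injective),
          Finset.card_union_of_disjoint (Sse_head_disj n e)]
      have cardt : ∀ e, (Sse (n + 1) true e).card = (Sse n false e).card := by
        intro e
        rw [Sse_succ_true hn e, Finset.card_image_of_injective _ (List.cons_injective)]
      obtain ⟨m, rfl⟩ : ∃ m, n = m + 1 := ⟨n - 1, by omega⟩
      refine ⟨?_, ?_, ?_, ?_⟩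
      · rw [cardf, A, C]
        exact fib_sum' m
      · rw [cardf, B, D]
        rcases Nat.eq_zero_or_pos m with hm | hm
        · subst hm; decide
        · rw [if_neg (by omega : ¬(m + 1 = 1))]
          obtain ⟨p, rfl⟩ : ∃ p, m = p + 1 := ⟨m - 1, by omega⟩
          exact fib_sum' p
      · rw [cardt, A]
        rfl
      · rw [cardt, B]
        rw [if_neg (by omega : ¬(m + 1 + 1 = 1))]
        rfl

private lemma Hh_eq {k : ℕ} (hk : 1 ≤ k) (s : Bool) :
    Hh k s = Sse k s false ∪ Sse k s true := by
  ext l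
  simp only [mem_Hh, Finset.mem_union, mem_Sse]
  constructor
  · rintro ⟨h1, h2, h3⟩
    have hne : l ≠ [] := by intro h; subst h; simp at h1; omega
    obtain ⟨a, ha⟩ := Option.isSome_iff_exists.mp (List.getLast?_isSome.mpr hne)
    cases a
    · exact Or.inl ⟨h1, h2, h3, ha⟩
    · exact Or.inr ⟨h1, h2, h3, ha⟩
  · rintro (⟨h1, h2, h3, -⟩ | ⟨h1, h2, h3, -⟩) <;> exact ⟨h1, h2, h3⟩

private lemma Hh_card {k : ℕ} (hk : 1 ≤ k) :
    (Hh k false).card = Nat.fib (k + 1) ∧ (Hh k true).card = Nat.fib k := by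
  obtain ⟨A, B, C, D⟩ := Sse_card hk
  constructor
  · rw [Hh_eq hk false, Finset.card_union_of_disjoint (Sse_last_disj k false), A, B]
    obtain ⟨m, rfl⟩ : ∃ m, k = m + 1 := ⟨k - 1, by omega⟩
    exact fib_sum' m
  · rw [Hh_eq hk true, Finset.card_union_of_disjoint (Sse_last_disj k true), C, D]
    rcases Nat.eq_or_lt_of_le hk with hm | hm
    · rw [← hm]; decide
    · rw [if_neg (by omega : ¬(k = 1))]
      obtain ⟨p, rfl⟩ : ∃ p, k = p + 2 := ⟨k - 2, by omega⟩
      exact fib_sum' p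

private lemma even_pal_eq {k : ℕ} (hk : 1 ≤ k) (s : Bool) :
    ((fibStrings (2 * k)).filter fun l => l.reverse = l ∧ l.head? = some s)
      = (Sse k s false).image (fun u => u ++ u.reverse) := by
  ext l
  simp only [Finset.mem_filter, Finset.mem_image, mem_fibStrings', mem_Sse]
  constructor
  · rintro ⟨⟨hlen, hfib⟩, hrev, hh⟩
    set u := l.take k with hu
    have hul : u.length = k := by rw [hu, List.length_take]; omega
    have hune : u ≠ [] := by
      intro h; rw [h] at hul; simp at hul; omega
    have hdrop : u.reverse = l.drop k := by
      rw [hu, List.reverse_take, hrev, hlen]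
      congr 1
      omega
    have hl : l = u ++ u.reverse := by
      rw [hdrop, hu, List.take_append_drop]
    have hfib2 : IsFibStr (u ++ u.reverse) := by rw [← hl]; exact hfib
    obtain ⟨h1, h2, h3⟩ := List.isChain_append.mp hfib2
    obtain ⟨a, ha⟩ := Option.isSome_iff_exists.mp (List.getLast?_isSome.mpr hune)
    have haf : a = false := by
      have := h3 a ha a (by rw [List.head?_reverse]; exact ha)
      tauto
    subst haf
    have hhu : u.head? = some s := by
      rw [hl, List.head?_append_of_ne_nil _ hune] at hh
      exact hh
    exact ⟨u, ⟨hul, h1, hhu, ha⟩, hl.symm⟩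
  · rintro ⟨u, ⟨hul, hufib, huh, hulast⟩, rfl⟩
    have hune : u ≠ [] := by intro h; subst h; simp at hul; omega
    refine ⟨⟨?_, ?_⟩, ?_, ?_⟩
    · simp only [List.length_append, List.length_reverse, hul]; omega
    · rw [IsFibStr, List.Chain', List.isChain_append]
      refine ⟨hufib, isFibStr_reverse hufib, ?_⟩
      intro x hx y hy
      rw [hulast] at hx
      simp only [Option.mem_def, Option.some.injEq] at hx
      exact Or.inl hx.symm
    · rw [List.reverse_append, List.reverse_reverse]
    · rw [List.head?_append_of_ne_nil _ hune]
      exact huh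

private lemma even_pal_card {k : ℕ} (hk : 1 ≤ k) (s : Bool) :
    ((fibStrings (2 * k)).filter fun l => l.reverse = l ∧ l.head? = some s).card
      = (Sse k s false).card := by
  rw [even_pal_eq hk s]
  apply Finset.card_image_of_injOn
  intro u hu v hv huv
  have hu1 := (mem_Sse.mp hu).1
  have hv1 := (mem_Sse.mp hv).1
  have := congrArg (List.take k) huv
  rwa [List.take_left' hu1, List.take_left' hv1] at this

private lemma odd_pal_eq {k : ℕ} (hk : 1 ≤ k) (s : Bool) :
    ((fibStrings (2 * k + 1)).filter fun l => l.reverse = l ∧ l.head? = some s)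
      = (Hh k s).image (fun u => u ++ false :: u.reverse)
        ∪ (Sse k s false).image (fun u => u ++ true :: u.reverse) := by
  ext l
  simp only [Finset.mem_filter, Finset.mem_image, Finset.mem_union, mem_fibStrings',
    mem_Sse, mem_Hh]
  constructor
  · rintro ⟨⟨hlen, hfib⟩, hrev, hh⟩
    have hkl : k < l.length := by omega
    set u := l.take k with hu
    have hul : u.length = k := by rw [hu, List.length_take]; omega
    have hune : u ≠ [] := by
      intro h; rw [h] at hul; simp at hul; omega
    have hdrop1 : u.reverse = l.drop (k + 1) := by
      rw [hu, List.reverse_take, hrev, hlen]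
      congr 1
      omega
    have hl : l = u ++ l[k] :: u.reverse := by
      rw [hdrop1, hu]
      conv_lhs => rw [← List.take_append_drop k l]
      rw [List.drop_eq_getElem_cons hkl]
    have hfib2 : IsFibStr (u ++ l[k] :: u.reverse) := by rw [← hl]; exact hfib
    obtain ⟨h1, h2, h3⟩ := List.isChain_append.mp hfib2
    have hhu : u.head? = some s := by
      rw [hl, List.head?_append_of_ne_nil _ hune] at hh
      exact hh
    obtain ⟨a, ha⟩ := Option.isSome_iff_exists.mp (List.getLast?_isSome.mpr hune)
    rcases Bool.eq_false_or_eq_true l[k] with hc | hc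
    · have haf : a = false := by
        have h4 := h3 a ha l[k] (by simp)
        rw [hc] at h4
        simpa using h4
      subst haf
      refine Or.inr ⟨u, ⟨hul, h1, hhu, ha⟩, ?_⟩
      rw [← hc, ← hl]
    · refine Or.inl ⟨u, ⟨hul, h1, hhu⟩, ?_⟩
      rw [← hc, ← hl]
  · rintro (⟨u, ⟨hul, hufib, huh⟩, rfl⟩ | ⟨u, ⟨hul, hufib, huh, hulast⟩, rfl⟩)
    · have hune : u ≠ [] := by intro h; subst h; simp at hul; omega
      refine ⟨⟨?_, ?_⟩, ?_, ?_⟩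
      · simp only [List.length_append, List.length_cons, List.length_reverse, hul]; omega
      · rw [IsFibStr, List.Chain', List.isChain_append]
        refine ⟨hufib, ?_, ?_⟩
        · rw [List.isChain_cons]
          exact ⟨fun y _ => Or.inl rfl, isFibStr_reverse hufib⟩
        · intro x hx y hy
          simp only [List.head?_cons, Option.mem_def, Option.some.injEq] at hy
          exact Or.inr hy.symm
      · simp
      · rw [List.head?_append_of_ne_nil _ hune]
        exact huh
    · have hune : u ≠ [] := by intro h; subst h; simp at hul; omega
      refine ⟨⟨?_, ?_⟩, ?_, ?_⟩
      · simp only [List.length_append, List.length_cons, List.length_reverse, hul]; omega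
      · rw [IsFibStr, List.Chain', List.isChain_append]
        refine ⟨hufib, ?_, ?_⟩
        · rw [List.isChain_cons]
          refine ⟨fun y hy => ?_, isFibStr_reverse hufib⟩
          rw [List.head?_reverse, hulast] at hy
          simp only [Option.mem_def, Option.some.injEq] at hy
          exact Or.inr hy.symm
        · intro x hx y hy
          rw [hulast] at hx
          simp only [Option.mem_def, Option.some.injEq] at hx
          exact Or.inl hx.symm
      · simp
      · rw [List.head?_append_of_ne_nil _ hune]
        exact huh

private lemma odd_pal_card {k : ℕ} (hk : 1 ≤ k) (s : Bool) :
    ((fibStrings (2 * k + 1)).filter fun l => l.reverse = l ∧ l.head? = some s).card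
      = (Hh k s).card + (Sse k s false).card := by
  rw [odd_pal_eq hk s]
  have hdisj : Disjoint ((Hh k s).image (fun u => u ++ false :: u.reverse))
      ((Sse k s false).image (fun u => u ++ true :: u.reverse)) := by
    rw [Finset.disjoint_left]
    rintro l hl1 hl2
    obtain ⟨u, hu, rfl⟩ := Finset.mem_image.mp hl1
    obtain ⟨v, hv, hvl⟩ := Finset.mem_image.mp hl2
    have hu1 : u.length = k := (mem_Hh.mp hu).1
    have hv1 : v.length = k := (mem_Sse.mp hv).1
    have h1 : (u ++ false :: u.reverse)[k]? = some false := by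
      rw [List.getElem?_append_right (by omega), hu1]
      simp
    have h2 : (u ++ false :: u.reverse)[k]? = some true := by
      rw [← hvl, List.getElem?_append_right (by omega : v.length ≤ k), hv1]
      simp
    rw [h1] at h2
    simp at h2
  rw [Finset.card_union_of_disjoint hdisj]
  congr 1
  · apply Finset.card_image_of_injOn
    intro u hu v hv huv
    have hu1 := (mem_Hh.mp hu).1
    have hv1 := (mem_Hh.mp hv).1
    have := congrArg (List.take k) huv
    rwa [List.take_left' hu1, List.take_left' hv1] at this
  · apply Finset.card_image_of_injOn
    intro u hu v hv huv
    have hu1 := (mem_Sse.mp hu).1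
    have hv1 := (mem_Sse.mp hv).1
    have := congrArg (List.take k) huv
    rwa [List.take_left' hu1, List.take_left' hv1] at this

private lemma pal_split {n : ℕ} (hn : 1 ≤ n) :
    ((fibStrings n).filter fun l => l.reverse = l).card
      = ((fibStrings n).filter fun l => l.reverse = l ∧ l.head? = some false).card
        + ((fibStrings n).filter fun l => l.reverse = l ∧ l.head? = some true).card := by
  have heq : ((fibStrings n).filter fun l => l.reverse = l)
      = ((fibStrings n).filter fun l => l.reverse = l ∧ l.head? = some false)
        ∪ ((fibStrings n).filter fun l => l.reverse = l ∧ l.head? = some true) := by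
    ext l
    simp only [Finset.mem_filter, Finset.mem_union]
    constructor
    · rintro ⟨hm, hp⟩
      have hne : l ≠ [] := by
        intro h; subst h
        have := (mem_fibStrings'.mp hm).1
        simp at this; omega
      obtain ⟨a, u, rfl⟩ := List.exists_cons_of_ne_nil hne
      cases a
      · exact Or.inl ⟨hm, hp, rfl⟩
      · exact Or.inr ⟨hm, hp, rfl⟩
    · rintro (⟨hm, hp, -⟩ | ⟨hm, hp, -⟩) <;> exact ⟨hm, hp⟩
  rw [heq]
  apply Finset.card_union_of_disjoint
  rw [Finset.disjoint_left]
  intro l h1 h2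
  have := ((Finset.mem_filter.mp h1).2.2).symm.trans ((Finset.mem_filter.mp h2).2.2)
  simp at this

end CountFibPalAux

/-- Counts of palindromic Fibonacci strings: for `k ≥ 1` there are `F_{k+1}` of length `2k`
and `F_{k+3}` of length `2k+1`; among those of length `2k`, `F_k` begin with 0 and `F_{k−1}`
begin with 1; among those of length `2k+1`, `F_{k+2}` begin with 0 and `F_{k+1}` begin
with 1. -/
theorem count_fib_palindromes (k : ℕ) (hk : 1 ≤ k) :
    ((fibStrings (2 * k)).filter fun l => l.reverse = l).card = Nat.fib (k + 1) ∧
    ((fibStrings (2 * k + 1)).filter fun l => l.reverse = l).card = Nat.fib (k + 3) ∧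
    ((fibStrings (2 * k)).filter fun l => l.reverse = l ∧ l.head? = some false).card
      = Nat.fib k ∧
    ((fibStrings (2 * k)).filter fun l => l.reverse = l ∧ l.head? = some true).card
      = Nat.fib (k - 1) ∧
    ((fibStrings (2 * k + 1)).filter fun l => l.reverse = l ∧ l.head? = some false).card
      = Nat.fib (k + 2) ∧
    ((fibStrings (2 * k + 1)).filter fun l => l.reverse = l ∧ l.head? = some true).card
      = Nat.fib (k + 1) := by
  obtain ⟨A, B, C, D⟩ := Sse_card hk
  obtain ⟨H0, H1⟩ := Hh_card hk
  obtain ⟨m, rfl⟩ : ∃ m, k = m + 1 := ⟨k - 1, by omega⟩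
  have e0 : ((fibStrings (2 * (m + 1))).filter
      fun l => l.reverse = l ∧ l.head? = some false).card = Nat.fib (m + 1) := by
    rw [even_pal_card hk false, A]
  have e1 : ((fibStrings (2 * (m + 1))).filter
      fun l => l.reverse = l ∧ l.head? = some true).card = Nat.fib (m + 1 - 1) := by
    rw [even_pal_card hk true, C]
  have o0 : ((fibStrings (2 * (m + 1) + 1)).filter
      fun l => l.reverse = l ∧ l.head? = some false).card = Nat.fib (m + 1 + 2) := by
    rw [odd_pal_card hk false, H0, A, Nat.add_comm, ← Nat.fib_add_two]
  have o1 : ((fibStrings (2 * (m + 1) + 1)).filter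
      fun l => l.reverse = l ∧ l.head? = some true).card = Nat.fib (m + 1 + 1) := by
    rw [odd_pal_card hk true, H1, C]
    simp only [Nat.add_sub_cancel]
    rw [Nat.add_comm, ← Nat.fib_add_two]
  refine ⟨?_, ?_, e0, e1, o0, o1⟩
  · rw [pal_split (by omega), e0, e1]
    simp only [Nat.add_sub_cancel]
    rw [Nat.add_comm, ← Nat.fib_add_two]
  · rw [pal_split (by omega), o0, o1]
    rw [Nat.add_comm, ← Nat.fib_add_two]
end

section
/- For every integer n ≥ 1, the set of sizes of the orbits of the set of Lucas strings of length n under the dihedral action generated by the cyclic shift α and the reversal β equals {k ≥ 1 : k divides n} ∪ {k ≥ 18 : k divides 2n}. -/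
open scoped Classical

open List

private def rotSet (u : List Bool) : Finset (List Bool) :=
  (Finset.range u.length).image fun i => u.rotate i

private noncomputable def minPer (u : List Bool) : ℕ := sInf {k | 0 < k ∧ u.rotate k = u}

private lemma rot_modEq {u : List Bool} {a b : ℕ} (h : a ≡ b [MOD u.length]) :
    u.rotate a = u.rotate b := by
  rw [← rotate_mod, ← rotate_mod u b]
  unfold Nat.ModEq at h
  rw [h]

private lemma minPer_mem {u : List Bool} (hn : 0 < u.length) :
    0 < minPer u ∧ u.rotate (minPer u) = u :=
  Nat.sInf_mem (⟨u.length, hn, rotate_length u⟩ : Set.Nonempty {k | 0 < k ∧ u.rotate k = u})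

private lemma minPer_pos {u : List Bool} (hn : 0 < u.length) : 0 < minPer u := (minPer_mem hn).1

private lemma rotate_minPer {u : List Bool} (hn : 0 < u.length) : u.rotate (minPer u) = u :=
  (minPer_mem hn).2

private lemma rotate_mul {u : List Bool} {p : ℕ} (hper : u.rotate p = u) (k : ℕ) :
    u.rotate (p * k) = u := by
  induction k with
  | zero => simp
  | succ k ih => rw [Nat.mul_succ, ← rotate_rotate, ih, hper]

private lemma minPer_dvd {u : List Bool} (hn : 0 < u.length) {a : ℕ} (ha : u.rotate a = u) :
    minPer u ∣ a := by
  have hppos := minPer_pos hn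
  have hrot := rotate_minPer hn
  have hmul : u.rotate (minPer u * (a / minPer u)) = u := rotate_mul hrot _
  have hmod : u.rotate (a % minPer u) = u := by
    have h2 := rotate_rotate u (minPer u * (a / minPer u)) (a % minPer u)
    rw [hmul] at h2
    rw [h2, Nat.div_add_mod, ha]
  by_contra hnd
  have h0 : a % minPer u ≠ 0 := fun h => hnd (Nat.dvd_of_mod_eq_zero h)
  have hle : minPer u ≤ a % minPer u := Nat.sInf_le (show a % minPer u ∈ {k | 0 < k ∧ u.rotate k = u} from
    ⟨Nat.pos_of_ne_zero h0, hmod⟩)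
  have hlt := Nat.mod_lt a hppos
  omega

private lemma minPer_dvd_length {u : List Bool} (hn : 0 < u.length) : minPer u ∣ u.length :=
  minPer_dvd hn (rotate_length u)

private lemma rotate_sub_eq {u : List Bool} {i j : ℕ} (hij : i ≤ j) (hj : j ≤ u.length)
    (h : u.rotate i = u.rotate j) : u.rotate (j - i) = u := by
  have h1 : u.rotate (i + (u.length - j)) = u := by
    rw [← rotate_rotate, h, rotate_rotate, show j + (u.length - j) = u.length from by omega,
      rotate_length]
  have h2 : u.rotate ((i + (u.length - j)) + (j - i)) = u := by
    rw [show (i + (u.length - j)) + (j - i) = u.length from by omega, rotate_length]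
  rw [← rotate_rotate, h1] at h2
  exact h2

private lemma minPer_le_length {u : List Bool} (hn : 0 < u.length) : minPer u ≤ u.length :=
  Nat.le_of_dvd hn (minPer_dvd_length hn)

private lemma card_rotSet {u : List Bool} (hn : 0 < u.length) : (rotSet u).card = minPer u := by
  set p := minPer u with hp
  have hset : rotSet u = (Finset.range p).image fun i => u.rotate i := by
    apply Finset.Subset.antisymm
    · intro v hv
      simp only [rotSet, Finset.mem_image, Finset.mem_range] at hv ⊢
      obtain ⟨i, hi, rfl⟩ := hv
      refine ⟨i % p, Nat.mod_lt _ (minPer_pos hn), ?_⟩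
      conv_rhs => rw [← Nat.div_add_mod i p]
      rw [← rotate_rotate, rotate_mul (rotate_minPer hn)]
    · apply Finset.image_subset_image
      exact Finset.range_subset_range.mpr (minPer_le_length hn)
  rw [hset, Finset.card_image_of_injOn, Finset.card_range]
  intro i hi j hj hijeq
  simp only [Finset.coe_range, Set.mem_Iio] at hi hj
  rcases le_total i j with h | h
  · have := minPer_dvd hn (rotate_sub_eq h (le_trans (le_of_lt hj) (minPer_le_length hn)) hijeq)
    have h0 := Nat.eq_zero_of_dvd_of_lt this (by omega)
    omega
  · have := minPer_dvd hn (rotate_sub_eq h (le_trans (le_of_lt hi) (minPer_le_length hn)) hijeq.symm)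
    have h0 := Nat.eq_zero_of_dvd_of_lt this (by omega)
    omega

private lemma mem_rotSet_of_rotate {u : List Bool} (hn : 0 < u.length) (a : ℕ) :
    u.rotate a ∈ rotSet u := by
  simp only [rotSet, Finset.mem_image, Finset.mem_range]
  exact ⟨a % u.length, Nat.mod_lt _ hn, rotate_mod u a⟩

private lemma rotSet_rotate {u : List Bool} (hn : 0 < u.length) (t : ℕ) :
    rotSet (u.rotate t) = rotSet u := by
  have hlen : (u.rotate t).length = u.length := length_rotate u t
  apply Finset.Subset.antisymm
  · intro v hv
    simp only [rotSet, Finset.mem_image, Finset.mem_range, hlen] at hv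
    obtain ⟨i, hi, rfl⟩ := hv
    rw [rotate_rotate]
    exact mem_rotSet_of_rotate hn _
  · intro v hv
    simp only [rotSet, Finset.mem_image, Finset.mem_range, hlen] at hv ⊢
    obtain ⟨i, hi, rfl⟩ := hv
    refine ⟨(u.length - t % u.length + i) % u.length, Nat.mod_lt _ hn, ?_⟩
    rw [rotate_rotate]
    apply rot_modEq
    calc t + (u.length - t % u.length + i) % u.length
        ≡ t + (u.length - t % u.length + i) [MOD u.length] :=
          Nat.ModEq.add_left t (Nat.mod_modEq _ _)
      _ = (t - t % u.length + u.length) + i := by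
          have := Nat.mod_le t u.length
          have := (Nat.mod_lt t hn)
          omega
      _ ≡ i [MOD u.length] := by
          have h1 : u.length ∣ t - t % u.length := by
            have := Nat.div_add_mod t u.length
            exact ⟨t / u.length, by omega⟩
          have : (t - t % u.length + u.length) + i ≡ (0 + 0) + i [MOD u.length] := by
            exact Nat.ModEq.add_right i
              ((Nat.modEq_zero_iff_dvd.mpr h1).add (Nat.modEq_zero_iff_dvd.mpr dvd_rfl))
          simpa using this

private lemma cyc_iter (u : List Bool) (j : ℕ) : cyc^[j] u = u.rotate (j * (u.length - 1)) := by
  induction j with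
  | zero => simp
  | succ j ih =>
    rw [Function.iterate_succ_apply', ih, cyc, List.length_rotate, List.rotate_rotate]
    congr 1
    ring

private lemma sq_pred_modEq (n : ℕ) (hn : 0 < n) : (n - 1) * (n - 1) ≡ 1 [MOD n] := by
  obtain ⟨m, rfl⟩ : ∃ m, n = m + 1 := ⟨n - 1, by omega⟩
  have hd : ((m + 1 : ℕ) : ℤ) ∣ (1 : ℤ) - (m * m : ℕ) := ⟨1 - m, by push_cast; ring⟩
  have := (Nat.modEq_iff_dvd (n := m + 1) (a := m * m) (b := 1)).mpr (by push_cast at hd ⊢; exact hd)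
  simpa using this

private lemma image_cyc_eq_rotSet (u : List Bool) (hn : 0 < u.length) :
    (Finset.range u.length).image (fun j => cyc^[j] u) = rotSet u := by
  apply Finset.Subset.antisymm
  · intro v hv
    simp only [Finset.mem_image, Finset.mem_range] at hv
    obtain ⟨j, hj, rfl⟩ := hv
    rw [cyc_iter]
    exact mem_rotSet_of_rotate hn _
  · intro v hv
    simp only [rotSet, Finset.mem_image, Finset.mem_range] at hv ⊢
    obtain ⟨i, hi, rfl⟩ := hv
    refine ⟨i * (u.length - 1) % u.length, Nat.mod_lt _ hn, ?_⟩
    rw [cyc_iter]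
    apply rot_modEq
    calc i * (u.length - 1) % u.length * (u.length - 1)
        ≡ i * (u.length - 1) * (u.length - 1) [MOD u.length] :=
          (Nat.mod_modEq _ _).mul_right _
      _ = i * ((u.length - 1) * (u.length - 1)) := by ring
      _ ≡ i * 1 [MOD u.length] := (sq_pred_modEq _ hn).mul_left i
      _ = i := by ring

private lemma dihedralOrbit_eq (u : List Bool) (hn : 0 < u.length) :
    dihedralOrbit u = rotSet u ∪ rotSet u.reverse := by
  rw [dihedralOrbit, image_cyc_eq_rotSet u hn]
  congr 1
  rw [show u.length = u.reverse.length from List.length_reverse.symm,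
    image_cyc_eq_rotSet u.reverse (by simpa using hn)]

private lemma minPer_reverse (u : List Bool) (hn : 0 < u.length) :
    minPer u.reverse = minPer u := by
  have hnr : 0 < u.reverse.length := by simpa using hn
  have key : ∀ v : List Bool, 0 < v.length → minPer v.reverse ∣ minPer v := by
    intro v hv
    have hvr : 0 < v.reverse.length := by simpa using hv
    have hper := rotate_minPer hv
    have hrev : v.reverse.rotate (v.length - minPer v % v.length) = v.reverse := by
      rw [← List.reverse_rotate, hper]
    have h1 : minPer v.reverse ∣ v.length - minPer v % v.length := minPer_dvd hvr hrev
    have h2 : minPer v.reverse ∣ v.length := by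
      simpa using minPer_dvd_length hvr
    have h3 : minPer v.reverse ∣ minPer v % v.length := by
      have heq : minPer v % v.length = v.length - (v.length - minPer v % v.length) := by
        have := Nat.mod_lt (minPer v) hv
        omega
      rw [heq]
      exact Nat.dvd_sub h2 h1
    have h5 := Nat.div_add_mod (minPer v) v.length
    have h4 : minPer v.reverse ∣ minPer v := by
      rw [← h5]
      exact dvd_add (h2.mul_right _) h3
    exact h4
  refine Nat.dvd_antisymm (key u hn) ?_
  have := key u.reverse hnr
  rwa [List.reverse_reverse] at this

private lemma card_orbit_achiral {u : List Bool} (hn : 0 < u.length)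
    (h : u.reverse ∈ rotSet u) : (dihedralOrbit u).card = minPer u := by
  obtain ⟨i, hi, heq⟩ : ∃ i, i < u.length ∧ u.rotate i = u.reverse := by
    simpa [rotSet, Finset.mem_image] using h
  rw [dihedralOrbit_eq u hn, ← heq, rotSet_rotate hn, Finset.union_self, card_rotSet hn]

private lemma card_orbit_chiral {u : List Bool} (hn : 0 < u.length)
    (h : u.reverse ∉ rotSet u) : (dihedralOrbit u).card = 2 * minPer u := by
  have hnr : 0 < u.reverse.length := by simpa using hn
  have hdisj : Disjoint (rotSet u) (rotSet u.reverse) := by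
    rw [Finset.disjoint_left]
    intro v hv hv'
    obtain ⟨i, hi, rfl⟩ : ∃ i, i < u.length ∧ u.rotate i = v := by
      simpa [rotSet, Finset.mem_image] using hv
    obtain ⟨j, hj, hji⟩ : ∃ j, j < u.reverse.length ∧ u.reverse.rotate j = u.rotate i := by
      simpa [rotSet, Finset.mem_image] using hv'
    apply h
    have hmem : u.reverse ∈ rotSet (u.reverse.rotate j) := by
      rw [rotSet_rotate hnr j]
      have := mem_rotSet_of_rotate hnr 0
      simpa using this
    rwa [hji, rotSet_rotate hn] at hmem
  rw [dihedralOrbit_eq u hn, Finset.card_union_of_disjoint hdisj, card_rotSet hn, card_rotSet hnr,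
    minPer_reverse u hn, two_mul]

private def mkStr (n p : ℕ) (g : ZMod p → Bool) : List Bool :=
  List.ofFn (fun i : Fin n => g ((i : ℕ) : ZMod p))

private lemma length_mkStr (n p : ℕ) (g : ZMod p → Bool) : (mkStr n p g).length = n :=
  List.length_ofFn

private lemma getElem_mkStr {n p : ℕ} (g : ZMod p → Bool) (i : ℕ)
    (h : i < (mkStr n p g).length) : (mkStr n p g)[i] = g (i : ZMod p) := by
  simp [mkStr, List.getElem_ofFn]

private lemma castn {p n : ℕ} (hpn : p ∣ n) : ((n : ℕ) : ZMod p) = 0 :=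
  (ZMod.natCast_eq_zero_iff n p).mpr hpn

private lemma cast_mod_n {p n : ℕ} (hpn : p ∣ n) (x : ℕ) :
    ((x % n : ℕ) : ZMod p) = (x : ZMod p) := by
  conv_rhs => rw [← Nat.div_add_mod x n]
  push_cast
  rw [castn hpn]
  ring

private lemma cast_val {p : ℕ} [NeZero p] (x : ZMod p) : ((x.val : ℕ) : ZMod p) = x := by
  simp [ZMod.natCast_val, ZMod.cast_id]

private lemma rotate_mkStr_iff {p n : ℕ} (hp : 0 < p) (hpn : p ∣ n) (hn : 0 < n)
    (g : ZMod p → Bool) (m : ℕ) :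
    (mkStr n p g).rotate m = mkStr n p g ↔ ∀ x : ZMod p, g (x + (m : ZMod p)) = g x := by
  haveI : NeZero p := ⟨by omega⟩
  have hlen : (mkStr n p g).length = n := length_mkStr n p g
  constructor
  · intro h x
    have hv : x.val < n := lt_of_lt_of_le (ZMod.val_lt x) (Nat.le_of_dvd hn hpn)
    have h2 := List.getElem_of_eq h (show x.val < ((mkStr n p g).rotate m).length by
      rw [List.length_rotate, hlen]; exact hv)
    rw [List.getElem_rotate, getElem_mkStr, getElem_mkStr, hlen, cast_mod_n hpn] at h2
    push_cast at h2
    rwa [cast_val] at h2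
  · intro h
    apply List.ext_getElem (by rw [List.length_rotate])
    intro i h1 h2
    rw [List.getElem_rotate, getElem_mkStr, getElem_mkStr, hlen, cast_mod_n hpn]
    push_cast
    exact h (i : ZMod p)

private lemma cast_pred_sub {p n : ℕ} (hpn : p ∣ n) {i : ℕ} (hn : 0 < n) (hi : i < n) :
    ((n - 1 - i : ℕ) : ZMod p) = -1 - (i : ZMod p) := by
  rw [Nat.cast_sub (show i ≤ n - 1 by omega), Nat.cast_sub (show 1 ≤ n by omega), castn hpn]
  push_cast
  ring

private lemma reverse_mkStr_iff {p n : ℕ} (hp : 0 < p) (hpn : p ∣ n) (hn : 0 < n)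
    (g : ZMod p → Bool) (m : ℕ) :
    (mkStr n p g).reverse = (mkStr n p g).rotate m ↔
      ∀ x : ZMod p, g (-1 - x) = g (x + (m : ZMod p)) := by
  haveI : NeZero p := ⟨by omega⟩
  have hlen : (mkStr n p g).length = n := length_mkStr n p g
  constructor
  · intro h x
    have hv : x.val < n := lt_of_lt_of_le (ZMod.val_lt x) (Nat.le_of_dvd hn hpn)
    have h2 := List.getElem_of_eq h (show x.val < ((mkStr n p g).reverse).length by
      rw [List.length_reverse, hlen]; exact hv)
    rw [List.getElem_reverse, List.getElem_rotate, getElem_mkStr, getElem_mkStr, hlen,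
      cast_mod_n hpn, cast_pred_sub hpn hn hv] at h2
    push_cast at h2
    rwa [cast_val] at h2
  · intro h
    apply List.ext_getElem (by rw [List.length_reverse, List.length_rotate])
    intro i h1 h2
    have hi : i < n := by rw [List.length_reverse, hlen] at h1; exact h1
    rw [List.getElem_reverse, List.getElem_rotate, getElem_mkStr, getElem_mkStr, hlen,
      cast_mod_n hpn, cast_pred_sub hpn hn hi]
    push_cast
    exact h (i : ZMod p)

private lemma mkStr_mem_lucas {p n : ℕ} (hp : 0 < p) (hpn : p ∣ n) (hn : 0 < n)
    (g : ZMod p → Bool) (haj : ∀ x : ZMod p, ¬(g x = true ∧ g (x + 1) = true))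
    (hend : ¬(g 0 = true ∧ g (-1) = true)) : mkStr n p g ∈ lucasStrings n := by
  haveI : NeZero p := ⟨by omega⟩
  have hlen : (mkStr n p g).length = n := length_mkStr n p g
  refine Finset.mem_filter.mpr ⟨?_, ?_, ?_⟩
  · simp only [allBool, Finset.mem_image]
    exact ⟨_, Finset.mem_univ _, rfl⟩
  · rw [IsFibStr]
    unfold List.Chain'
    rw [List.isChain_iff_getElem]
    intro i hi
    rw [getElem_mkStr, getElem_mkStr]
    have hadj := haj (i : ZMod p)
    push_cast
    cases h1 : g ((i : ℕ) : ZMod p) <;> cases h2 : g (((i : ℕ) : ZMod p) + 1) <;> simp_all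
  · have h0 : (mkStr n p g).head? = some (g 0) := by
      rw [List.head?_eq_getElem?, List.getElem?_eq_getElem (by rw [hlen]; exact hn),
        getElem_mkStr]
      norm_num
    have hL : (mkStr n p g).getLast? = some (g (-1)) := by
      rw [List.getLast?_eq_getElem?, List.getElem?_eq_getElem (by rw [hlen]; omega),
        getElem_mkStr]
      congr 1
      rw [hlen, Nat.cast_sub (show 1 ≤ n by omega), castn hpn]
      push_cast
      ring
    rw [h0, hL]
    simp only [Option.some.injEq]
    exact hend

private lemma minPer_mkStr {p n : ℕ} (hp : 0 < p) (hpn : p ∣ n) (hn : 0 < n)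
    (g : ZMod p → Bool)
    (hdvd : ∀ q : ℕ, 0 < q → (mkStr n p g).rotate q = mkStr n p g → p ∣ q) :
    minPer (mkStr n p g) = p := by
  have hn' : 0 < (mkStr n p g).length := by rw [length_mkStr]; exact hn
  have hper : (mkStr n p g).rotate p = mkStr n p g :=
    (rotate_mkStr_iff hp hpn hn g p).mpr (by intro x; rw [ZMod.natCast_self, add_zero])
  exact Nat.dvd_antisymm (minPer_dvd hn' hper) (hdvd _ (minPer_pos hn') (rotate_minPer hn'))

private lemma zmod_int_ne {p : ℕ} (a b : ℤ) (hne : a ≠ b) (hd : (a - b).natAbs < p) :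
    ((a : ZMod p)) ≠ (b : ZMod p) := by
  intro h
  have h1 : ((a - b : ℤ) : ZMod p) = 0 := by push_cast; rw [h]; ring
  rw [ZMod.intCast_zmod_eq_zero_iff_dvd] at h1
  have h2 : (p : ℤ).natAbs ∣ (a - b).natAbs := Int.natAbs_dvd_natAbs.mpr h1
  rw [Int.natAbs_natCast] at h2
  have h3 : (a - b).natAbs ≠ 0 := by
    intro h0
    exact hne (by omega)
  have := Nat.le_of_dvd (Nat.pos_of_ne_zero h3) h2
  omega

private lemma exists_orbit_card_one {n : ℕ} (hn : 0 < n) :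
    ∃ u ∈ lucasStrings n, (dihedralOrbit u).card = 1 := by
  refine ⟨mkStr n 1 (fun _ => false),
    mkStr_mem_lucas one_pos (one_dvd n) hn _ (by simp) (by simp), ?_⟩
  have hn' : 0 < (mkStr n 1 (fun _ => false)).length := by rw [length_mkStr]; exact hn
  have hrev : (mkStr n 1 (fun _ => false)).reverse ∈ rotSet (mkStr n 1 (fun _ => false)) := by
    have h := (reverse_mkStr_iff one_pos (one_dvd n) hn (fun _ => false) 0).mpr (fun _ => rfl)
    rw [h]
    exact mem_rotSet_of_rotate hn' 0
  rw [card_orbit_achiral hn' hrev, minPer_mkStr one_pos (one_dvd n) hn _ (fun q _ _ => one_dvd q)]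

private lemma exists_orbit_card_dvd {n k : ℕ} (hn : 0 < n) (hk : 2 ≤ k) (hkn : k ∣ n) :
    ∃ u ∈ lucasStrings n, (dihedralOrbit u).card = k := by
  have hkpos : 0 < k := by omega
  set g : ZMod k → Bool := fun x => decide (x = -1) with hg
  have h10 : (0 : ZMod k) ≠ -1 := by
    intro h
    have h1 : ((1 : ℕ) : ZMod k) = 0 := by push_cast; linear_combination h
    rw [ZMod.natCast_eq_zero_iff] at h1
    have := Nat.le_of_dvd one_pos h1
    omega
  have haj : ∀ x : ZMod k, ¬(g x = true ∧ g (x + 1) = true) := by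
    rintro x ⟨h1, h2⟩
    simp only [hg, decide_eq_true_eq] at h1 h2
    rw [h1] at h2
    exact h10 (by linear_combination h2)
  have hend : ¬(g 0 = true ∧ g (-1) = true) := by
    rintro ⟨h1, _⟩
    exact h10 (by simpa [hg] using h1)
  have hdvd : ∀ q : ℕ, 0 < q → (mkStr n k g).rotate q = mkStr n k g → k ∣ q := by
    intro q hq hrot
    rw [rotate_mkStr_iff hkpos hkn hn] at hrot
    have h := hrot (-1 - (q : ZMod k))
    rw [show (-1 - (q : ZMod k) + (q : ZMod k)) = -1 from by ring] at h
    have htrue : g (-1) = true := by simp [hg]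
    rw [htrue] at h
    have h2 : (-1 : ZMod k) - (q : ZMod k) = -1 := by simpa [hg] using h.symm
    have h3 : ((q : ℕ) : ZMod k) = 0 := by linear_combination -h2
    rwa [ZMod.natCast_eq_zero_iff] at h3
  refine ⟨mkStr n k g, mkStr_mem_lucas hkpos hkn hn g haj hend, ?_⟩
  have hn' : 0 < (mkStr n k g).length := by rw [length_mkStr]; exact hn
  have hcast : ((k - 1 : ℕ) : ZMod k) = -1 := by
    rw [Nat.cast_sub (show 1 ≤ k by omega), ZMod.natCast_self]
    push_cast
    ring
  have hrev : (mkStr n k g).reverse ∈ rotSet (mkStr n k g) := by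
    have h := (reverse_mkStr_iff hkpos hkn hn g (k - 1)).mpr ?_
    · rw [h]
      exact mem_rotSet_of_rotate hn' _
    · intro x
      rw [hcast]
      simp only [hg]
      apply decide_eq_decide.mpr
      constructor
      · intro h
        linear_combination -h
      · intro h
        linear_combination -h
  rw [card_orbit_achiral hn' hrev, minPer_mkStr hkpos hkn hn g hdvd]

private def g2 (p : ℕ) : ZMod p → Bool := fun x => decide (x = 0 ∨ x = 2 ∨ x = 5)

private lemma g2_false {p : ℕ} (hp : 9 ≤ p) (t : ℤ) (hl : -3 ≤ t) (hu : t ≤ 7)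
    (h0 : t ≠ 0) (h2 : t ≠ 2) (h5 : t ≠ 5) : g2 p ((t : ZMod p)) = false := by
  simp only [g2, decide_eq_false_iff_not]
  push_neg
  refine ⟨?_, ?_, ?_⟩
  · exact fun h => zmod_int_ne (p := p) t 0 h0 (by omega) (by push_cast; exact h)
  · exact fun h => zmod_int_ne (p := p) t 2 h2 (by omega) (by push_cast; exact h)
  · exact fun h => zmod_int_ne (p := p) t 5 h5 (by omega) (by push_cast; exact h)

private lemma exists_orbit_card_chiral {n p : ℕ} (hn : 0 < n) (hp : 9 ≤ p) (hpn : p ∣ n) :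
    ∃ u ∈ lucasStrings n, (dihedralOrbit u).card = 2 * p := by
  have hp0 : 0 < p := by omega
  have haj : ∀ x : ZMod p, ¬(g2 p x = true ∧ g2 p (x + 1) = true) := by
    rintro x ⟨h1, h2⟩
    simp only [g2, decide_eq_true_eq] at h1 h2
    rcases h1 with h1 | h1 | h1 <;> rcases h2 with h2 | h2 | h2
    · exact zmod_int_ne (p := p) 1 0 (by decide) (by omega) (by push_cast; linear_combination h2 - h1)
    · exact zmod_int_ne (p := p) 1 2 (by decide) (by omega) (by push_cast; linear_combination h2 - h1)
    · exact zmod_int_ne (p := p) 1 5 (by decide) (by omega) (by push_cast; linear_combination h2 - h1)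
    · exact zmod_int_ne (p := p) 3 0 (by decide) (by omega) (by push_cast; linear_combination h2 - h1)
    · exact zmod_int_ne (p := p) 3 2 (by decide) (by omega) (by push_cast; linear_combination h2 - h1)
    · exact zmod_int_ne (p := p) 3 5 (by decide) (by omega) (by push_cast; linear_combination h2 - h1)
    · exact zmod_int_ne (p := p) 6 0 (by decide) (by omega) (by push_cast; linear_combination h2 - h1)
    · exact zmod_int_ne (p := p) 6 2 (by decide) (by omega) (by push_cast; linear_combination h2 - h1)
    · exact zmod_int_ne (p := p) 6 5 (by decide) (by omega) (by push_cast; linear_combination h2 - h1)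
  have hend : ¬(g2 p 0 = true ∧ g2 p (-1) = true) := by
    rintro ⟨_, h2⟩
    simp only [g2, decide_eq_true_eq] at h2
    rcases h2 with h2 | h2 | h2
    · exact zmod_int_ne (p := p) (-1) 0 (by decide) (by omega) (by push_cast; linear_combination h2)
    · exact zmod_int_ne (p := p) (-1) 2 (by decide) (by omega) (by push_cast; linear_combination h2)
    · exact zmod_int_ne (p := p) (-1) 5 (by decide) (by omega) (by push_cast; linear_combination h2)
  have hdvd : ∀ q : ℕ, 0 < q → (mkStr n p (g2 p)).rotate q = mkStr n p (g2 p) → p ∣ q := by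
    intro q hq hrot
    rw [rotate_mkStr_iff hp0 hpn hn] at hrot
    have h0 := hrot 0
    rw [zero_add] at h0
    have hq0 : (q : ZMod p) = 0 ∨ (q : ZMod p) = 2 ∨ (q : ZMod p) = 5 := by
      have : g2 p ((q : ℕ) : ZMod p) = true := by rw [h0]; simp [g2]
      simpa [g2] using this
    rcases hq0 with h | h | h
    · rwa [ZMod.natCast_eq_zero_iff] at h
    · exfalso
      have h2 := hrot 2
      rw [h, show ((2 : ZMod p) + 2) = ((4 : ℤ) : ZMod p) from by push_cast; ring,
        g2_false hp 4 (by decide) (by decide) (by decide) (by decide) (by decide)] at h2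
      have : g2 p 2 = true := by simp [g2]
      rw [this] at h2
      exact Bool.false_ne_true h2
    · exfalso
      have h2 := hrot 2
      rw [h, show ((2 : ZMod p) + 5) = ((7 : ℤ) : ZMod p) from by push_cast; ring,
        g2_false hp 7 (by decide) (by decide) (by decide) (by decide) (by decide)] at h2
      have : g2 p 2 = true := by simp [g2]
      rw [this] at h2
      exact Bool.false_ne_true h2
  refine ⟨mkStr n p (g2 p), mkStr_mem_lucas hp0 hpn hn _ haj hend, ?_⟩
  have hn' : 0 < (mkStr n p (g2 p)).length := by rw [length_mkStr]; exact hn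
  have hchir : (mkStr n p (g2 p)).reverse ∉ rotSet (mkStr n p (g2 p)) := by
    intro hmem
    obtain ⟨m, hm, heq⟩ : ∃ m, m < (mkStr n p (g2 p)).length ∧
        (mkStr n p (g2 p)).rotate m = (mkStr n p (g2 p)).reverse := by
      simpa [rotSet, Finset.mem_image] using hmem
    have heq2 := (reverse_mkStr_iff hp0 hpn hn (g2 p) m).mp heq.symm
    set c : ZMod p := (m : ZMod p) - 1 with hc
    have H : ∀ x : ZMod p, g2 p x = g2 p (c - x) := by
      intro x
      have h := heq2 (-1 - x)
      rw [show (-1 - (-1 - x) : ZMod p) = x from by ring,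
        show ((-1 - x) + (m : ZMod p) : ZMod p) = c - x from by rw [hc]; ring] at h
      exact h
    have h0 : g2 p c = true := by
      have hh := H 0
      rw [sub_zero] at hh
      rw [← hh]
      simp [g2]
    have hc0 : c = 0 ∨ c = 2 ∨ c = 5 := by simpa [g2] using h0
    have h2true : g2 p 2 = true := by simp [g2]
    have h5true : g2 p 5 = true := by simp [g2]
    rcases hc0 with hc0 | hc0 | hc0
    · have h2 := H 2
      rw [hc0, show ((0 : ZMod p) - 2) = ((-2 : ℤ) : ZMod p) from by push_cast; ring,
        g2_false hp (-2) (by decide) (by decide) (by decide) (by decide) (by decide),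
        h2true] at h2
      exact absurd h2 (by simp)
    · have h2 := H 5
      rw [hc0, show ((2 : ZMod p) - 5) = ((-3 : ℤ) : ZMod p) from by push_cast; ring,
        g2_false hp (-3) (by decide) (by decide) (by decide) (by decide) (by decide),
        h5true] at h2
      exact absurd h2 (by simp)
    · have h2 := H 2
      rw [hc0, show ((5 : ZMod p) - 2) = ((3 : ℤ) : ZMod p) from by push_cast; ring,
        g2_false hp 3 (by decide) (by decide) (by decide) (by decide) (by decide),
        h2true] at h2
      exact absurd h2 (by simp)
  rw [card_orbit_chiral hn' hchir, minPer_mkStr hp0 hpn hn _ hdvd]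

private def noAdj : List Bool → Bool
  | true :: true :: _ => false
  | _ :: l => noAdj l
  | [] => true

private lemma noAdj_of_chain' : ∀ l : List Bool,
    l.Chain' (fun a b => a = false ∨ b = false) → noAdj l = true
  | [], _ => rfl
  | [a], _ => by cases a <;> rfl
  | a :: b :: l, h => by
    unfold List.Chain' at h
    rw [List.isChain_cons_cons] at h
    obtain ⟨h1, h2⟩ := h
    have ih := noAdj_of_chain' (b :: l) h2
    cases a
    · simpa [noAdj] using ih
    · cases b
      · simpa [noAdj] using ih
      · rcases h1 with h | h <;> simp at h

set_option maxRecDepth 100000 in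
set_option synthInstance.maxSize 2000 in
set_option synthInstance.maxHeartbeats 1000000 in
set_option maxHeartbeats 4000000 in
private lemma small_achiral : ∀ p < 9, 0 < p → ∀ f : Fin p → Bool,
    noAdj (List.ofFn f) = true →
    ¬((List.ofFn f).head? = some true ∧ (List.ofFn f).getLast? = some true) →
    (∀ q < p, 0 < q → (List.ofFn f).rotate q ≠ List.ofFn f) →
    ¬(∀ m < p, (List.ofFn f).reverse ≠ (List.ofFn f).rotate m) := by decide


private lemma listPow_succ (v : List Bool) (d : ℕ) : listPow v (d + 1) = v ++ listPow v d := by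
  simp [listPow, List.replicate_succ]

private lemma length_listPow (v : List Bool) (d : ℕ) : (listPow v d).length = d * v.length := by
  induction d with
  | zero => simp [listPow]
  | succ d ih => rw [listPow_succ, List.length_append, ih]; ring

private lemma getElem_listPow (v : List Bool) (hv : 0 < v.length) (d i : ℕ)
    (h : i < (listPow v d).length) :
    (listPow v d)[i] = v[i % v.length]'(Nat.mod_lt _ hv) := by
  induction d generalizing i with
  | zero => simp [listPow] at h
  | succ d ih =>
    rw [listPow_succ] at h
    rw [List.getElem_of_eq (listPow_succ v d) (by rwa [listPow_succ])]
    by_cases hi : i < v.length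
    · rw [List.getElem_append_left hi]
      simp only [Nat.mod_eq_of_lt hi]
    · push_neg at hi
      rw [List.getElem_append_right hi]
      rw [ih (i - v.length) (by simp only [List.length_append] at h; omega)]
      simp only [(Nat.mod_eq_sub_mod hi).symm]

private lemma getElem_period {u : List Bool} {p : ℕ} (hper : u.rotate p = u) {j : ℕ}
    (h : j + p < u.length) : u[j]'(by omega) = u[j + p]'h := by
  have h1 := List.getElem_of_eq hper (show j < (u.rotate p).length by
    rw [List.length_rotate]; omega)
  rw [List.getElem_rotate] at h1
  simp only [Nat.mod_eq_of_lt h] at h1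
  exact h1.symm

private lemma getElem_mod {u : List Bool} {p : ℕ} (hper : u.rotate p = u) (hp : 0 < p)
    (hple : p ≤ u.length) (i : ℕ) (h : i < u.length) :
    u[i] = u[i % p]'(by have := Nat.mod_lt i hp; omega) := by
  induction i using Nat.strong_induction_on with
  | _ i ih =>
    by_cases hi : i < p
    · simp only [Nat.mod_eq_of_lt hi]
    · push_neg at hi
      have hstep : u[i - p]'(by omega) = u[(i - p) + p]'(by omega) :=
        getElem_period hper (by omega)
      simp only [show i - p + p = i from by omega] at hstep
      rw [← hstep, ih (i - p) (by omega) (by omega)]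
      simp only [(Nat.mod_eq_sub_mod hi).symm]

private lemma eq_listPow {u : List Bool} {p : ℕ} (hper : u.rotate p = u) (hp : 0 < p)
    (hpn : p ∣ u.length) (hn : 0 < u.length) :
    u = listPow (u.take p) (u.length / p) := by
  have hple : p ≤ u.length := Nat.le_of_dvd hn hpn
  have hlt : (u.take p).length = p := by rw [List.length_take]; omega
  apply List.ext_getElem
  · rw [length_listPow, hlt, Nat.div_mul_cancel hpn]
  intro i h1 h2
  rw [getElem_listPow _ (by omega) _ _ h2]
  simp only [hlt]
  rw [List.getElem_take]
  exact getElem_mod hper hp hple i h1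

private lemma listPow_comm (v : List Bool) (d : ℕ) : listPow v d ++ v = v ++ listPow v d := by
  induction d with
  | zero => simp [listPow]
  | succ d ih => rw [listPow_succ, List.append_assoc, ih, ← List.append_assoc]

private lemma reverse_listPow (v : List Bool) (d : ℕ) :
    (listPow v d).reverse = listPow v.reverse d := by
  induction d with
  | zero => simp [listPow]
  | succ d ih =>
    rw [listPow_succ, List.reverse_append, ih, listPow_succ, listPow_comm]

private lemma rotate_listPow (v : List Bool) (hv : 0 < v.length) (d : ℕ) (q : ℕ) :
    (listPow v d).rotate q = listPow (v.rotate q) d := by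
  have hlen1 : (listPow v d).length = d * v.length := length_listPow v d
  apply List.ext_getElem
  · rw [List.length_rotate, hlen1, length_listPow, List.length_rotate]
  intro i h1 h2
  rw [List.getElem_rotate, getElem_listPow v hv, getElem_listPow (v.rotate q)
    (by rw [List.length_rotate]; exact hv), List.getElem_rotate]
  congr 1
  simp only [List.length_rotate, hlen1]
  rw [Nat.mod_mod_of_dvd _ (dvd_mul_left _ _)]
  exact ((Nat.mod_modEq i v.length).add_right q).symm

private lemma chiral_large {u : List Bool} (hn : 0 < u.length) (hluc : IsLucasStr u)
    (hchir : u.reverse ∉ rotSet u) : 9 ≤ minPer u := by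
  by_contra hlt
  push_neg at hlt
  have hp0 : 0 < minPer u := minPer_pos hn
  have hper : u.rotate (minPer u) = u := rotate_minPer hn
  have hpn : minPer u ∣ u.length := minPer_dvd_length hn
  have hple : minPer u ≤ u.length := Nat.le_of_dvd hn hpn
  set p := minPer u with hp
  set w := u.take p with hw
  have hwlen : w.length = p := by rw [hw, List.length_take]; omega
  have hu : u = listPow w (u.length / p) := eq_listPow hper hp0 hpn hn
  have hd0 : 0 < u.length / p := Nat.div_pos hple hp0
  have hchain : w.Chain' (fun a b => a = false ∨ b = false) :=
    hluc.1.prefix (List.take_prefix p u)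
  have hhead : w.head? = some (u[0]'hn) := by
    rw [List.head?_eq_getElem?, List.getElem?_eq_getElem (by rw [hwlen]; omega)]
    simp only [hw, List.getElem_take]
  have hlast : w.getLast? = some (u[p - 1]'(by omega)) := by
    rw [List.getLast?_eq_getElem?, show w.length - 1 = p - 1 from by rw [hwlen],
      List.getElem?_eq_getElem (by rw [hwlen]; omega)]
    simp only [hw, List.getElem_take]
  have huhead : u.head? = some (u[0]'hn) := by
    rw [List.head?_eq_getElem?, List.getElem?_eq_getElem hn]
  have hulast : u.getLast? = some (u[u.length - 1]'(by omega)) := by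
    rw [List.getLast?_eq_getElem?, List.getElem?_eq_getElem (by omega)]
  have hwend : ¬(w.head? = some true ∧ w.getLast? = some true) := by
    rintro ⟨h1, h2⟩
    rw [hhead, Option.some.injEq] at h1
    rw [hlast, Option.some.injEq] at h2
    by_cases hpeq : p = u.length
    · apply hluc.2
      refine ⟨by rw [huhead, h1], ?_⟩
      rw [hulast, Option.some.injEq]
      simp only [← hpeq]
      exact h2
    · have hplt : p < u.length := by omega
      have hup : u[p]'hplt = true := by
        rw [getElem_mod hper hp0 hple p hplt]
        simp only [Nat.mod_self]
        exact h1
      have hch := (List.isChain_iff_getElem.mp hluc.1) (p - 1) (by omega)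
      simp only [show p - 1 + 1 = p from by omega] at hch
      rw [h2, hup] at hch
      simp at hch
  have hprim : ∀ q < p, 0 < q → w.rotate q ≠ w := by
    intro q hq hq0 hrot
    have huq : u.rotate q = u := by
      calc u.rotate q = (listPow w (u.length / p)).rotate q := by rw [← hu]
        _ = listPow (w.rotate q) (u.length / p) := rotate_listPow w (by omega) _ q
        _ = u := by rw [hrot, ← hu]
    have hdvd := minPer_dvd hn huq
    have := Nat.eq_zero_of_dvd_of_lt hdvd hq
    omega
  have hofn : List.ofFn (fun i : Fin p => w[i]'(by rw [hwlen]; exact i.2)) = w := by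
    apply List.ext_getElem
    · rw [List.length_ofFn, hwlen]
    intro i h1 h2
    simp [List.getElem_ofFn]
  have hsmall := small_achiral p (by omega) hp0 (fun i : Fin p => w[i]'(by rw [hwlen]; exact i.2))
  rw [hofn] at hsmall
  have hex := hsmall (noAdj_of_chain' w hchain) hwend hprim
  push_neg at hex
  obtain ⟨m, hm, hrev⟩ := hex
  apply hchir
  have hurev : u.reverse = u.rotate m := by
    calc u.reverse = (listPow w (u.length / p)).reverse := by rw [← hu]
      _ = listPow w.reverse (u.length / p) := reverse_listPow w _
      _ = listPow (w.rotate m) (u.length / p) := by rw [hrev]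
      _ = (listPow w (u.length / p)).rotate m := (rotate_listPow w (by omega) _ m).symm
      _ = u.rotate m := by rw [← hu]
  rw [hurev]
  exact mem_rotSet_of_rotate hn m

/-- For `n ≥ 1`, the set of sizes of the dihedral orbits of Lucas strings of length `n`
equals `{k ≥ 1 : k ∣ n} ∪ {k ≥ 18 : k ∣ 2n}`. -/
theorem lucas_vertex_orbit_sizes (n : ℕ) (hn : 1 ≤ n) :
    {k : ℕ | ∃ u ∈ lucasStrings n, (dihedralOrbit u).card = k}
      = {k : ℕ | 1 ≤ k ∧ k ∣ n} ∪ {k : ℕ | 18 ≤ k ∧ k ∣ 2 * n} := by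
  have hn0 : 0 < n := hn
  ext k
  simp only [Set.mem_setOf_eq, Set.mem_union]
  constructor
  · rintro ⟨u, hu, rfl⟩
    obtain ⟨hall, hluc⟩ := Finset.mem_filter.mp hu
    have hlen : u.length = n := by
      simp only [allBool, Finset.mem_image] at hall
      obtain ⟨f, _, rfl⟩ := hall
      exact List.length_ofFn
    have hn' : 0 < u.length := by omega
    by_cases hch : u.reverse ∈ rotSet u
    · left
      rw [card_orbit_achiral hn' hch]
      exact ⟨minPer_pos hn', hlen ▸ minPer_dvd_length hn'⟩
    · right
      rw [card_orbit_chiral hn' hch]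
      have h9 := chiral_large hn' hluc hch
      refine ⟨by omega, ?_⟩
      rw [← hlen]
      exact mul_dvd_mul_left 2 (minPer_dvd_length hn')
  · have hdvdcase : ∀ k : ℕ, 1 ≤ k → k ∣ n →
        ∃ u ∈ lucasStrings n, (dihedralOrbit u).card = k := by
      intro k hk1 hkn
      rcases eq_or_lt_of_le hk1 with h1 | h2
      · rw [← h1]
        exact exists_orbit_card_one hn0
      · exact exists_orbit_card_dvd hn0 h2 hkn
    rintro (⟨hk1, hkn⟩ | ⟨hk18, hk2n⟩)
    · exact hdvdcase k hk1 hkn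
    · by_cases hkn : k ∣ n
      · exact hdvdcase k (by omega) hkn
      · have hk2 : 2 ∣ k := by
          by_contra hodd
          have hcop : Nat.Coprime k 2 :=
            Nat.coprime_comm.mp (Nat.prime_two.coprime_iff_not_dvd.mpr hodd)
          exact hkn (hcop.dvd_of_dvd_mul_left hk2n)
        obtain ⟨p, rfl⟩ := hk2
        have hpn : p ∣ n := (mul_dvd_mul_iff_left (two_ne_zero)).mp hk2n
        exact exists_orbit_card_chiral hn0 (by omega) hpn
end

section
/- For every integer n ≥ 1, there exists an asymmetric Lucas string of length n if and only if n ≥ 9. -/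
open scoped Classical

/-! ### Auxiliary material for the proof -/

section SmallN

def fibB : List Bool → Bool
  | a :: b :: l => (!a || !b) && fibB (b :: l)
  | _ => true

lemma fibB_iff : ∀ l, fibB l = true ↔ IsFibStr l
  | [] => by simp [fibB, IsFibStr, List.Chain']
  | [a] => by simp [fibB, IsFibStr, List.Chain']
  | a :: b :: l => by
    have := fibB_iff (b :: l)
    simp only [fibB, IsFibStr, List.Chain', List.isChain_cons_cons, Bool.and_eq_true, Bool.or_eq_true,
      Bool.not_eq_true'] at this ⊢
    rw [this]

instance : DecidablePred IsFibStr := fun l => decidable_of_iff _ (fibB_iff l)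

instance : DecidablePred IsLucasStr := fun l =>
  inferInstanceAs (Decidable (IsFibStr l ∧ ¬(l.head? = some true ∧ l.getLast? = some true)))

def enumB : ℕ → List (List Bool)
  | 0 => [[]]
  | n+1 => (enumB n).flatMap (fun l => [false :: l, true :: l])

lemma mem_enumB : ∀ {n : ℕ} {l : List Bool}, l.length = n → l ∈ enumB n := by
  intro n
  induction n with
  | zero => intro l hl; simp [List.length_eq_zero_iff.mp hl, enumB]
  | succ n ih =>
    intro l hl
    match l with
    | a :: l' =>
      have h : l' ∈ enumB n := ih (by simpa using hl)
      cases a <;> simp [enumB] <;> exact h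

end SmallN

section BigN

/-- indicator of positions {0,3,5} -/
def lS (n : ℕ) (x : ZMod n) : Bool :=
  decide (x = ((0:ℕ):ZMod n) ∨ x = ((3:ℕ):ZMod n) ∨ x = ((5:ℕ):ZMod n))

def lw (n : ℕ) : List Bool := List.ofFn (fun i : Fin n => lS n ((i : ℕ) : ZMod n))

lemma lw_length (n : ℕ) : (lw n).length = n := by simp [lw]

lemma cyc_iter_eq_rotate {α : Type*} (l : List α) (j : ℕ) :
    cyc^[j] l = l.rotate (j * (l.length - 1)) := by
  induction j with
  | zero => simp
  | succ j ih =>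
    rw [Function.iterate_succ_apply', ih, cyc, List.length_rotate, List.rotate_rotate]
    ring_nf

lemma getA (n : ℕ) (hn : 1 ≤ n) (j k : ℕ) (hk : k < n) :
    (cyc^[j] (lw n))[k]? = some (lS n ((k : ZMod n) - (j : ZMod n))) := by
  rw [cyc_iter_eq_rotate, List.getElem?_rotate (by rw [lw_length]; omega),
    List.getElem?_eq_getElem (by rw [lw_length]; exact Nat.mod_lt _ (by omega))]
  simp only [lw, List.getElem_ofFn, List.length_ofFn, List.length_reverse, lw_length]
  congr 2
  rw [ZMod.natCast_mod]
  push_cast [Nat.cast_sub hn, ZMod.natCast_self]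
  ring

lemma getB (n : ℕ) (hn : 1 ≤ n) (j k : ℕ) (hk : k < n) :
    (cyc^[j] (lw n).reverse)[k]? = some (lS n ((j : ZMod n) - 1 - (k : ZMod n))) := by
  have hrl : (lw n).reverse.length = n := by simp [lw_length]
  rw [cyc_iter_eq_rotate, List.getElem?_rotate (by rw [hrl]; omega),
    List.getElem?_eq_getElem (by rw [hrl]; exact Nat.mod_lt _ (by omega))]
  simp only [hrl, List.getElem_reverse]
  simp only [lw, List.getElem_ofFn, List.length_ofFn, List.length_reverse, lw_length]
  congr 2
  have key : ∀ m : ℕ, m < n → ((n - 1 - m : ℕ) : ZMod n) = -1 - (m : ZMod n) := by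
    intro m hm
    have h1 : (n - 1 - m) + (m + 1) = n := by omega
    have := congrArg (fun t : ℕ => (t : ZMod n)) h1
    push_cast [ZMod.natCast_self] at this
    linear_combination this
  rw [key ((k + j * (n - 1)) % n) (Nat.mod_lt _ (by omega)), ZMod.natCast_mod]
  push_cast [Nat.cast_sub hn, ZMod.natCast_self]
  ring

variable {n : ℕ}

lemma lS_true_iff (x : ZMod n) : lS n x = true ↔
    (x = ((0:ℕ):ZMod n) ∨ x = ((3:ℕ):ZMod n) ∨ x = ((5:ℕ):ZMod n)) := by
  simp [lS]

lemma cast_pos_ne_zero (hn : 9 ≤ n) {m : ℕ} (h1 : 0 < m) (h2 : m ≤ 8) :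
    ((m : ℕ) : ZMod n) ≠ 0 := by
  rw [Ne, ZMod.natCast_eq_zero_iff]
  intro hd
  have := Nat.le_of_dvd h1 hd
  omega

lemma castinj (hn : 9 ≤ n) {a b : ℕ} (ha : a < n) (hb : b < n)
    (h : ((a:ℕ):ZMod n) = ((b:ℕ):ZMod n)) : a = b := by
  haveI : NeZero n := ⟨by omega⟩
  have := congrArg ZMod.val h
  rwa [ZMod.val_cast_of_lt ha, ZMod.val_cast_of_lt hb] at this

lemma claimA (hn : 9 ≤ n) (t : ZMod n) (h : ∀ y : ZMod n, lS n (y + t) = lS n y) : t = 0 := by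
  have hS0 : lS n 0 = true := by simp [lS]
  have hS3 : lS n ((3:ℕ):ZMod n) = true := by simp [lS]
  have h0 := h 0
  rw [zero_add, hS0] at h0
  rw [lS_true_iff] at h0
  rcases h0 with h0 | h0 | h0
  · rw [h0, Nat.cast_zero]
  · exfalso
    have h3 := h ((3:ℕ):ZMod n)
    rw [hS3, h0, show ((3:ℕ):ZMod n) + ((3:ℕ):ZMod n) = ((6:ℕ):ZMod n) by push_cast; ring,
      lS_true_iff] at h3
    rcases h3 with h3 | h3 | h3 <;> (have := castinj hn (by omega) (by omega) h3; omega)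
  · exfalso
    have h3 := h ((3:ℕ):ZMod n)
    rw [hS3, h0, show ((3:ℕ):ZMod n) + ((5:ℕ):ZMod n) = ((8:ℕ):ZMod n) by push_cast; ring,
      lS_true_iff] at h3
    rcases h3 with h3 | h3 | h3 <;> (have := castinj hn (by omega) (by omega) h3; omega)

lemma claimB (hn : 9 ≤ n) (c : ZMod n) (h : ∀ y : ZMod n, lS n (c - y) = lS n y) : False := by
  have hS0 : lS n 0 = true := by simp [lS]
  have hS3 : lS n ((3:ℕ):ZMod n) = true := by simp [lS]
  have hS5 : lS n ((5:ℕ):ZMod n) = true := by simp [lS]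
  have h0 := h 0
  rw [sub_zero, hS0, lS_true_iff] at h0
  rcases h0 with h0 | h0 | h0
  · have h3 := h ((3:ℕ):ZMod n)
    rw [hS3, h0, lS_true_iff] at h3
    rcases h3 with h3 | h3 | h3
    · exact cast_pos_ne_zero hn (by omega) (by omega)
        (show ((3:ℕ):ZMod n) = 0 by push_cast at h3 ⊢; linear_combination -h3)
    · exact cast_pos_ne_zero hn (by omega) (by omega)
        (show ((6:ℕ):ZMod n) = 0 by push_cast at h3 ⊢; linear_combination -h3)
    · exact cast_pos_ne_zero hn (by omega) (by omega)
        (show ((8:ℕ):ZMod n) = 0 by push_cast at h3 ⊢; linear_combination -h3)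
  · have h5 := h ((5:ℕ):ZMod n)
    rw [hS5, h0, lS_true_iff] at h5
    rcases h5 with h5 | h5 | h5
    · exact cast_pos_ne_zero hn (by omega) (by omega)
        (show ((2:ℕ):ZMod n) = 0 by push_cast at h5 ⊢; linear_combination -h5)
    · exact cast_pos_ne_zero hn (by omega) (by omega)
        (show ((5:ℕ):ZMod n) = 0 by push_cast at h5 ⊢; linear_combination -h5)
    · exact cast_pos_ne_zero hn (by omega) (by omega)
        (show ((7:ℕ):ZMod n) = 0 by push_cast at h5 ⊢; linear_combination -h5)
  · have h3 := h ((3:ℕ):ZMod n)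
    rw [hS3, h0, show ((5:ℕ):ZMod n) - ((3:ℕ):ZMod n) = ((2:ℕ):ZMod n) by push_cast; ring,
      lS_true_iff] at h3
    rcases h3 with h3 | h3 | h3 <;> (have := castinj hn (by omega) (by omega) h3; omega)

end BigN

section BigN2

variable {n : ℕ}

lemma injA (hn : 9 ≤ n) {i j : ℕ} (hi : i < n) (hj : j < n)
    (h : cyc^[i] (lw n) = cyc^[j] (lw n)) : i = j := by
  haveI : NeZero n := ⟨by omega⟩
  have key : ∀ y : ZMod n, lS n (y + ((i:ZMod n) - (j:ZMod n))) = lS n y := by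
    intro y
    set k : ℕ := (y + (i:ZMod n)).val with hkdef
    have hkn : k < n := ZMod.val_lt _
    have hkc : (k : ZMod n) = y + (i:ZMod n) := ZMod.natCast_zmod_val _
    have e1 := getA n (by omega) i k hkn
    have e2 := getA n (by omega) j k hkn
    rw [h, e2] at e1
    have e3 := Option.some.inj e1
    rw [show y + ((i:ZMod n) - (j:ZMod n)) = (k:ZMod n) - (j:ZMod n) by rw [hkc]; ring,
      show y = (k:ZMod n) - (i:ZMod n) by rw [hkc]; ring]
    exact e3
  have ht := claimA hn _ key
  exact castinj hn hi hj (by linear_combination ht)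

lemma injB (hn : 9 ≤ n) {i j : ℕ} (hi : i < n) (hj : j < n)
    (h : cyc^[i] (lw n).reverse = cyc^[j] (lw n).reverse) : i = j := by
  haveI : NeZero n := ⟨by omega⟩
  have key : ∀ y : ZMod n, lS n (y + ((j:ZMod n) - (i:ZMod n))) = lS n y := by
    intro y
    set k : ℕ := ((i:ZMod n) - 1 - y).val with hkdef
    have hkn : k < n := ZMod.val_lt _
    have hkc : (k : ZMod n) = (i:ZMod n) - 1 - y := ZMod.natCast_zmod_val _
    have e1 := getB n (by omega) i k hkn
    have e2 := getB n (by omega) j k hkn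
    rw [h, e2] at e1
    have e3 := Option.some.inj e1
    rw [show y + ((j:ZMod n) - (i:ZMod n)) = (j:ZMod n) - 1 - (k:ZMod n) by rw [hkc]; ring,
      show y = (i:ZMod n) - 1 - (k:ZMod n) by rw [hkc]; ring]
    exact e3
  have ht := claimA hn _ key
  exact (castinj hn hj hi (by linear_combination ht)).symm

lemma disjAB (hn : 9 ≤ n) {i j : ℕ} (hi : i < n) (hj : j < n)
    (h : cyc^[i] (lw n) = cyc^[j] (lw n).reverse) : False := by
  haveI : NeZero n := ⟨by omega⟩
  refine claimB hn ((j:ZMod n) - 1 - (i:ZMod n)) (fun y => ?_)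
  set k : ℕ := (y + (i:ZMod n)).val with hkdef
  have hkn : k < n := ZMod.val_lt _
  have hkc : (k : ZMod n) = y + (i:ZMod n) := ZMod.natCast_zmod_val _
  have e1 := getA n (by omega) i k hkn
  have e2 := getB n (by omega) j k hkn
  rw [h, e2] at e1
  have e3 := Option.some.inj e1
  rw [show (j:ZMod n) - 1 - (i:ZMod n) - y = (j:ZMod n) - 1 - (k:ZMod n) by rw [hkc]; ring,
    show y = (k:ZMod n) - (i:ZMod n) by rw [hkc]; ring]
  exact e3

lemma orbit_card (hn : 9 ≤ n) : (dihedralOrbit (lw n)).card = 2 * n := by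
  unfold dihedralOrbit
  rw [lw_length]
  have hdisj : Disjoint ((Finset.range n).image fun j => cyc^[j] (lw n))
      ((Finset.range n).image fun j => cyc^[j] (lw n).reverse) := by
    rw [Finset.disjoint_left]
    rintro a ha hb
    simp only [Finset.mem_image, Finset.mem_range] at ha hb
    obtain ⟨i, hi, rfl⟩ := ha
    obtain ⟨j, hj, hEq⟩ := hb
    exact disjAB hn hi hj hEq.symm
  rw [Finset.card_union_of_disjoint hdisj,
    Finset.card_image_of_injOn (fun i hi j hj h => by
      simp only [Finset.coe_range, Set.mem_Iio] at hi hj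
      exact injA hn hi hj h),
    Finset.card_image_of_injOn (fun i hi j hj h => by
      simp only [Finset.coe_range, Set.mem_Iio] at hi hj
      exact injB hn hi hj h),
    Finset.card_range]
  ring

lemma mem_lucas {m : ℕ} {u : List Bool} :
    u ∈ lucasStrings m ↔ u ∈ allBool m ∧ IsLucasStr u := by
  simp [lucasStrings, Finset.mem_filter]

lemma lw_mem (hn : 9 ≤ n) : lw n ∈ lucasStrings n := by
  haveI : NeZero n := ⟨by omega⟩
  rw [mem_lucas]
  refine ⟨?_, ?_, ?_⟩
  · show _ ∈ allBool n
    rw [allBool]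
    exact Finset.mem_image.mpr ⟨_, Finset.mem_univ _, rfl⟩
  · rw [IsFibStr, List.Chain', List.isChain_iff_getElem]
    intro i hilt
    rw [lw_length] at hilt
    simp only [lw, List.get_ofFn, List.getElem_ofFn, Fin.cast_mk]
    by_contra hcon
    push_neg at hcon
    obtain ⟨h1, h2⟩ := hcon
    simp only [ne_eq, Bool.not_eq_false] at h1 h2
    rw [lS_true_iff] at h1 h2
    rcases h1 with h1 | h1 | h1 <;> rcases h2 with h2 | h2 | h2 <;>
      (have a1 := castinj hn (by omega) (by omega) h1;
       have a2 := castinj hn (by omega) (by omega) h2; omega)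
  · rintro ⟨-, hlast⟩
    have hne : lw n ≠ [] := by
      intro hcon
      have := lw_length n
      rw [hcon] at this
      simp at this
      omega
    have glemma : ∀ (l : List Bool) (h : l ≠ []), l.getLast? = l[l.length - 1]? := by
      intro l h
      rw [List.getLast?_eq_getLast_of_ne_nil h, List.getLast_eq_getElem,
        List.getElem?_eq_getElem]
    have e := getA n (by omega) 0 (n-1) (by omega)
    rw [Function.iterate_zero, id_eq] at e
    rw [glemma _ hne, lw_length, e] at hlast
    have hl2 := Option.some.inj hlast
    rw [Nat.cast_zero, sub_zero, lS_true_iff] at hl2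
    rcases hl2 with h1 | h1 | h1 <;>
      (have := castinj hn (by omega) (by omega) h1; omega)

end BigN2


set_option maxRecDepth 100000 in
/-- For `n ≥ 1`, there exists an asymmetric Lucas string of length `n` iff `n ≥ 9`. -/
theorem exists_asymmetric_lucas_iff (n : ℕ) (hn : 1 ≤ n) :
    (∃ u ∈ lucasStrings n, (dihedralOrbit u).card = 2 * n) ↔ 9 ≤ n := by
  constructor
  · rintro ⟨u, hu, hc⟩
    by_contra h9
    have hn8 : n ≤ 8 := by omega
    have hu' := mem_lucas.mp hu
    have hlen : u.length = n := by
      have h1 := hu'.1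
      rw [allBool] at h1
      obtain ⟨f, -, rfl⟩ := Finset.mem_image.mp h1
      simp
    have henum : u ∈ enumB n := mem_enumB hlen
    interval_cases n
    · exact (by decide : ∀ v ∈ enumB 1, ¬(IsLucasStr v ∧ (dihedralOrbit v).card = 2*1)) u henum ⟨hu'.2, hc⟩
    · exact (by decide : ∀ v ∈ enumB 2, ¬(IsLucasStr v ∧ (dihedralOrbit v).card = 2*2)) u henum ⟨hu'.2, hc⟩
    · exact (by decide : ∀ v ∈ enumB 3, ¬(IsLucasStr v ∧ (dihedralOrbit v).card = 2*3)) u henum ⟨hu'.2, hc⟩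
    · exact (by decide : ∀ v ∈ enumB 4, ¬(IsLucasStr v ∧ (dihedralOrbit v).card = 2*4)) u henum ⟨hu'.2, hc⟩
    · exact (by decide : ∀ v ∈ enumB 5, ¬(IsLucasStr v ∧ (dihedralOrbit v).card = 2*5)) u henum ⟨hu'.2, hc⟩
    · exact (by decide : ∀ v ∈ enumB 6, ¬(IsLucasStr v ∧ (dihedralOrbit v).card = 2*6)) u henum ⟨hu'.2, hc⟩
    · exact (by decide : ∀ v ∈ enumB 7, ¬(IsLucasStr v ∧ (dihedralOrbit v).card = 2*7)) u henum ⟨hu'.2, hc⟩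
    · exact (by decide : ∀ v ∈ enumB 8, ¬(IsLucasStr v ∧ (dihedralOrbit v).card = 2*8)) u henum ⟨hu'.2, hc⟩
  · intro h9
    exact ⟨lw n, lw_mem h9, orbit_card h9⟩
end
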